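/- arXiv:1406.0530 — 5 statements merged into one kernel-verified Lean document; each statement's English description precedes it below -/
import Mathlib

section
/- The steering robustness of a bipartite state is bounded above by its generalized robustness of entanglement: for any bipartite state ρ_AB, R_steer^{A→B}(ρ_AB) ≤ R_g(ρ_AB), where R_steer^{A→B}(ρ_AB) = sup over measurement assemblages {M_{a|x}} on A of R({Tr_A((M_{a|x}⊗1)ρ_AB)}). -/
open Matrix BigOperators
open scoped ComplexOrder

/-- Unsteerable assemblage (deterministic decomposition). -/
def Unsteerable {A X : Type*} [Fintype A] [Fintype X] [DecidableEq A] [DecidableEq X] {n : ℕ}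
    (ρ : A → X → Matrix (Fin n) (Fin n) ℂ) : Prop :=
  ∃ σ : (X → A) → Matrix (Fin n) (Fin n) ℂ,
    (∀ f, (σ f).PosSemidef) ∧
    (∀ a x, ρ a x = ∑ f : X → A, if a = f x then σ f else 0)

/-- An assemblage: positive operators, reduced state independent of the input,
and normalized. -/
def IsAssemblage {A X : Type*} [Fintype A] {n : ℕ}
    (ρ : A → X → Matrix (Fin n) (Fin n) ℂ) : Prop :=
  (∀ a x, (ρ a x).PosSemidef) ∧
  (∀ x x', ∑ a, ρ a x = ∑ a, ρ a x') ∧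
  (∀ x, (∑ a, ρ a x).trace = 1)

/-- Steering robustness of an assemblage. -/
noncomputable def SteeringRobustness
    {A X : Type*} [Fintype A] [Fintype X] [DecidableEq A] [DecidableEq X] {n : ℕ}
    (ρ : A → X → Matrix (Fin n) (Fin n) ℂ) : ℝ :=
  sInf {t : ℝ | 0 ≤ t ∧ ∃ τ : A → X → Matrix (Fin n) (Fin n) ℂ, IsAssemblage τ ∧
    Unsteerable (fun a x => (((1 + t)⁻¹ : ℝ) : ℂ) • (ρ a x + ((t : ℝ) : ℂ) • τ a x))}

open Kronecker

/-- Partial trace over the first (A) factor of a bipartite matrix. -/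
noncomputable def ptraceA {dA dB : ℕ} (M : Matrix (Fin dA × Fin dB) (Fin dA × Fin dB) ℂ) :
    Matrix (Fin dB) (Fin dB) ℂ :=
  Matrix.of fun i j => ∑ a, M (a, i) (a, j)

/-- Separable bipartite operators. -/
def IsSeparableState {dA dB : ℕ} (ρ : Matrix (Fin dA × Fin dB) (Fin dA × Fin dB) ℂ) : Prop :=
  ∃ (k : ℕ) (w : Fin k → ℝ) (σA : Fin k → Matrix (Fin dA) (Fin dA) ℂ)
    (σB : Fin k → Matrix (Fin dB) (Fin dB) ℂ),
    (∀ l, 0 ≤ w l) ∧ (∑ l, w l = 1) ∧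
    (∀ l, (σA l).PosSemidef ∧ (σA l).trace = 1) ∧
    (∀ l, (σB l).PosSemidef ∧ (σB l).trace = 1) ∧
    ρ = ∑ l, ((w l : ℝ) : ℂ) • (σA l ⊗ₖ σB l)

/-- The assemblage induced on `B` by measuring `A`. -/
noncomputable def inducedAssemblage {dA dB nA nX : ℕ}
    (M : Fin nA → Fin nX → Matrix (Fin dA) (Fin dA) ℂ)
    (ρ : Matrix (Fin dA × Fin dB) (Fin dA × Fin dB) ℂ) :
    Fin nA → Fin nX → Matrix (Fin dB) (Fin dB) ℂ :=
  fun a x => ptraceA ((M a x ⊗ₖ (1 : Matrix (Fin dB) (Fin dB) ℂ)) * ρ)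

/-- The steering robustness of a bipartite state: the supremum, over measurement
assemblages on `A`, of the steering robustness of the induced assemblage on `B`. -/
noncomputable def Rsteer {dA dB : ℕ}
    (ρ : Matrix (Fin dA × Fin dB) (Fin dA × Fin dB) ℂ) : ℝ :=
  sSup {r : ℝ | ∃ (nA nX : ℕ) (M : Fin nA → Fin nX → Matrix (Fin dA) (Fin dA) ℂ),
    (∀ a x, (M a x).PosSemidef) ∧ (∀ x, ∑ a, M a x = 1) ∧
    r = SteeringRobustness (inducedAssemblage M ρ)}

/-- Generalized robustness of entanglement. -/
noncomputable def Rg {dA dB : ℕ}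
    (ρ : Matrix (Fin dA × Fin dB) (Fin dA × Fin dB) ℂ) : ℝ :=
  sInf {t : ℝ | 0 ≤ t ∧ ∃ τ : Matrix (Fin dA × Fin dB) (Fin dA × Fin dB) ℂ,
    τ.PosSemidef ∧ τ.trace = 1 ∧
    IsSeparableState ((((1 + t)⁻¹ : ℝ) : ℂ) • (ρ + ((t : ℝ) : ℂ) • τ))}

open scoped MatrixOrder in
noncomputable def Matrix.PosSemidef.sqrt {n : Type*} [Fintype n] [DecidableEq n]
    {M : Matrix n n ℂ} (_hM : M.PosSemidef) : Matrix n n ℂ := CFC.sqrt M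

open scoped MatrixOrder in
lemma Matrix.PosSemidef.sqrt_mul_self {n : Type*} [Fintype n] [DecidableEq n]
    {M : Matrix n n ℂ} (hM : M.PosSemidef) : hM.sqrt * hM.sqrt = M :=
  CFC.sqrt_mul_sqrt_self M hM.nonneg

open scoped MatrixOrder in
lemma Matrix.PosSemidef.posSemidef_sqrt {n : Type*} [Fintype n] [DecidableEq n]
    {M : Matrix n n ℂ} (hM : M.PosSemidef) : hM.sqrt.PosSemidef :=
  (CFC.sqrt_nonneg M).posSemidef

namespace RSteerAux

lemma smul_psd {n : Type*} [Fintype n] {c : ℂ} (hc : 0 ≤ c)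
    {P : Matrix n n ℂ} (hP : P.PosSemidef) : (c • P).PosSemidef := by
  constructor
  · have hcs : star c = c := by
      rw [Complex.star_def, Complex.conj_eq_iff_im]
      exact ((Complex.le_def.1 hc).2).symm
    rw [Matrix.IsHermitian, conjTranspose_smul, hcs, hP.1.eq]
  · intro x
    exact (hP.smul hc).2 x

lemma psd_diag_nonneg {n : Type*} [Fintype n] [DecidableEq n] {P : Matrix n n ℂ}
    (hP : P.PosSemidef) (i : n) : 0 ≤ P i i := by
  have := hP.diag_nonneg (i := i)
  simpa [dotProduct, Pi.single_apply, apply_ite] using this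

lemma psd_trace_nonneg {n : Type*} [Fintype n] [DecidableEq n] {P : Matrix n n ℂ}
    (hP : P.PosSemidef) : 0 ≤ P.trace :=
  Finset.sum_nonneg fun i _ => psd_diag_nonneg hP i

lemma trace_mul_nonneg {n : Type*} [Fintype n] [DecidableEq n] {M P : Matrix n n ℂ}
    (hM : M.PosSemidef) (hP : P.PosSemidef) : 0 ≤ (M * P).trace := by
  have h1 : M * P = hM.sqrt * hM.sqrt * P := by rw [hM.sqrt_mul_self]
  rw [h1, mul_assoc, trace_mul_comm]
  have h2 : (hM.sqrt * P * hM.sqrt).PosSemidef := by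
    have := hP.mul_mul_conjTranspose_same hM.sqrt
    rwa [hM.posSemidef_sqrt.1.eq] at this
  exact psd_trace_nonneg h2

lemma sum_psd {n ι : Type*} [Fintype n] (s : Finset ι) (f : ι → Matrix n n ℂ)
    (h : ∀ i ∈ s, (f i).PosSemidef) : (∑ i ∈ s, f i).PosSemidef := by
  classical
  induction s using Finset.induction with
  | empty => simpa using Matrix.PosSemidef.zero
  | insert _ _ hx ih =>
    rw [Finset.sum_insert hx]
    exact (h _ (Finset.mem_insert_self _ _)).add
      (ih fun i hi => h i (Finset.mem_insert_of_mem hi))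

lemma kron_conjTranspose {m n p q : Type*} (A : Matrix m n ℂ) (B : Matrix p q ℂ) :
    (A ⊗ₖ B)ᴴ = Aᴴ ⊗ₖ Bᴴ := by
  ext ⟨i, j⟩ ⟨k, l⟩
  simp [conjTranspose_apply, kroneckerMap_apply, mul_comm]

/-- Each eigenvalue of a PSD matrix with trace 1 is at most 1;
so `κ•1 - P` is PSD for `κ ≥ 1`. -/
lemma psd_smul_one_sub {n : Type*} [Fintype n] [DecidableEq n] {P : Matrix n n ℂ}
    (hP : P.PosSemidef) (htr : P.trace = 1) {κ : ℝ} (hκ : 1 ≤ κ) :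
    (((κ : ℝ) : ℂ) • 1 - P).PosSemidef := by
  have hH := hP.1
  set U : Matrix n n ℂ := ↑(hH.eigenvectorUnitary) with hU
  have hUU : U * star U = 1 := (Matrix.mem_unitaryGroup_iff).mp hH.eigenvectorUnitary.2
  have hUU' : star U * U = 1 := (Matrix.mem_unitaryGroup_iff').mp hH.eigenvectorUnitary.2
  have hspec : P = U * diagonal (RCLike.ofReal ∘ hH.eigenvalues) * star U :=
    hH.spectral_theorem
  -- sum of eigenvalues equals 1
  have htrD : (diagonal (RCLike.ofReal ∘ hH.eigenvalues) : Matrix n n ℂ).trace = 1 := by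
    rw [← htr]
    conv_rhs => rw [hspec]
    rw [trace_mul_cycle, hUU', one_mul]
  have hsum : ∑ i, hH.eigenvalues i = 1 := by
    have h := congrArg Complex.re htrD
    simpa [Matrix.trace_diagonal, Function.comp, Complex.ofReal_sum] using h
  have heig : ∀ i, hH.eigenvalues i ≤ 1 := by
    intro i
    rw [← hsum]
    exact Finset.single_le_sum (fun j _ => hP.eigenvalues_nonneg j) (Finset.mem_univ i)
  have hdiag : (κ : ℂ) • (1 : Matrix n n ℂ) - diagonal (RCLike.ofReal ∘ hH.eigenvalues)
      = diagonal (fun i => ((κ - hH.eigenvalues i : ℝ) : ℂ)) := by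
    ext i j
    by_cases h : i = j <;>
      simp [h, Matrix.one_apply, Matrix.diagonal_apply, Matrix.smul_apply,
        Complex.ofReal_sub, Matrix.sub_apply]
  have hrw : ((κ : ℂ) • 1 - P) = U * diagonal (fun i => ((κ - hH.eigenvalues i : ℝ) : ℂ)) * star U := by
    have h1 : (κ : ℂ) • (1 : Matrix n n ℂ) = U * ((κ : ℂ) • 1) * star U := by
      rw [mul_smul_comm, smul_mul_assoc, mul_one, hUU]
    rw [← hdiag, Matrix.mul_sub, Matrix.sub_mul, ← h1]
    conv_lhs => rw [hspec]
  rw [hrw, Matrix.star_eq_conjTranspose]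
  refine Matrix.PosSemidef.mul_mul_conjTranspose_same ?_ U
  rw [posSemidef_diagonal_iff]
  intro i
  rw [Complex.zero_le_real]
  linarith [heig i]

end RSteerAux

namespace RSteerAux2
open RSteerAux

variable {dA dB : ℕ}

lemma ptraceA_submatrix_eq (Z : Matrix (Fin dA × Fin dB) (Fin dA × Fin dB) ℂ) :
    ptraceA Z = ∑ a : Fin dA, Z.submatrix (fun i => (a, i)) (fun j => (a, j)) := by
  ext i j
  simp [ptraceA, Matrix.submatrix_apply, Matrix.sum_apply]

lemma ptraceA_psd {Z : Matrix (Fin dA × Fin dB) (Fin dA × Fin dB) ℂ}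
    (hZ : Z.PosSemidef) : (ptraceA Z).PosSemidef := by
  rw [ptraceA_submatrix_eq]
  exact sum_psd _ _ fun a _ => hZ.submatrix _

lemma ptraceA_add (M N : Matrix (Fin dA × Fin dB) (Fin dA × Fin dB) ℂ) :
    ptraceA (M + N) = ptraceA M + ptraceA N := by
  ext i j; simp [ptraceA, Finset.sum_add_distrib]

lemma ptraceA_smul (c : ℂ) (M : Matrix (Fin dA × Fin dB) (Fin dA × Fin dB) ℂ) :
    ptraceA (c • M) = c • ptraceA M := by
  ext i j; simp [ptraceA, Finset.mul_sum]

lemma ptraceA_sum {ι : Type*} (s : Finset ι) (f : ι → Matrix (Fin dA × Fin dB) (Fin dA × Fin dB) ℂ) :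
    ptraceA (∑ l ∈ s, f l) = ∑ l ∈ s, ptraceA (f l) := by
  ext i j
  simp [ptraceA, Matrix.sum_apply]
  rw [Finset.sum_comm]

lemma trace_ptraceA (Z : Matrix (Fin dA × Fin dB) (Fin dA × Fin dB) ℂ) :
    (ptraceA Z).trace = Z.trace := by
  simp only [ptraceA, Matrix.trace, Matrix.diag, Matrix.of_apply, Fintype.sum_prod_type]
  rw [Finset.sum_comm]

lemma ptraceA_kron (R : Matrix (Fin dA) (Fin dA) ℂ) (S : Matrix (Fin dB) (Fin dB) ℂ) :
    ptraceA (R ⊗ₖ S) = R.trace • S := by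
  ext i j
  simp [ptraceA, Matrix.trace, Matrix.diag, Finset.sum_mul]

lemma ptraceA_conj (X Y : Matrix (Fin dA) (Fin dA) ℂ)
    (Z : Matrix (Fin dA × Fin dB) (Fin dA × Fin dB) ℂ) :
    ptraceA ((X ⊗ₖ (1 : Matrix (Fin dB) (Fin dB) ℂ)) * Z * (Y ⊗ₖ 1))
      = ptraceA (((Y * X) ⊗ₖ (1 : Matrix (Fin dB) (Fin dB) ℂ)) * Z) := by
  ext i j
  simp only [ptraceA, Matrix.of_apply, Matrix.mul_apply, kroneckerMap_apply, Matrix.one_apply,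
    Fintype.sum_prod_type, ite_mul, mul_ite, mul_zero, zero_mul, mul_one, one_mul,
    Finset.sum_ite_eq, Finset.sum_ite_eq', Finset.mem_univ, if_true]
  simp only [Finset.sum_mul, Finset.mul_sum]
  rw [Finset.sum_comm]
  refine Finset.sum_congr rfl fun b _ => ?_
  rw [Finset.sum_comm]
  refine Finset.sum_congr rfl fun c _ => ?_
  refine Finset.sum_congr rfl fun a _ => ?_
  ring

lemma induced_psd {M : Matrix (Fin dA) (Fin dA) ℂ}
    {Z : Matrix (Fin dA × Fin dB) (Fin dA × Fin dB) ℂ}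
    (hM : M.PosSemidef) (hZ : Z.PosSemidef) :
    (ptraceA ((M ⊗ₖ (1 : Matrix (Fin dB) (Fin dB) ℂ)) * Z)).PosSemidef := by
  have h1 : ptraceA ((M ⊗ₖ (1 : Matrix (Fin dB) (Fin dB) ℂ)) * Z)
      = ptraceA ((hM.sqrt ⊗ₖ (1 : Matrix (Fin dB) (Fin dB) ℂ)) * Z
          * (hM.sqrt ⊗ₖ (1 : Matrix (Fin dB) (Fin dB) ℂ))) := by
    rw [ptraceA_conj, hM.sqrt_mul_self]
  rw [h1]
  apply ptraceA_psd
  have hB : (hM.sqrt ⊗ₖ (1 : Matrix (Fin dB) (Fin dB) ℂ))ᴴ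
      = hM.sqrt ⊗ₖ (1 : Matrix (Fin dB) (Fin dB) ℂ) := by
    rw [kron_conjTranspose, hM.posSemidef_sqrt.1.eq, Matrix.conjTranspose_one]
  have := hZ.mul_mul_conjTranspose_same (hM.sqrt ⊗ₖ (1 : Matrix (Fin dB) (Fin dB) ℂ))
  rwa [hB] at this

lemma sum_ite_prod {A X : Type*} [Fintype A] [Fintype X] [DecidableEq A] [DecidableEq X]
    (q : X → A → ℂ) (h1 : ∀ x, ∑ a, q x a = 1) (x : X) (a : A) :
    (∑ f : X → A, if a = f x then ∏ x', q x' (f x') else 0) = q x a := by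
  set q' : X → A → ℂ :=
    fun x' a' => if x' = x then (if a' = a then q x' a' else 0) else q x' a' with hq'
  have key : ∀ f : X → A,
      (if a = f x then ∏ x', q x' (f x') else 0) = ∏ x', q' x' (f x') := by
    intro f
    have hx : ∀ g : X → A, ∀ h : X → A → ℂ, (∏ x', h x' (g x'))
        = (∏ x' ∈ Finset.univ.erase x, h x' (g x')) * h x (g x) :=
      fun g h => (Finset.prod_erase_mul _ _ (Finset.mem_univ x)).symm
    rw [hx f q', hx f q]
    have herase : ∀ x' ∈ Finset.univ.erase x, q' x' (f x') = q x' (f x') := by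
      intro x' hx'
      simp [hq', Finset.ne_of_mem_erase hx']
    rw [Finset.prod_congr rfl herase]
    by_cases h : a = f x
    · simp [hq', ← h]
    · simp [hq', Ne.symm h]
      exact fun hc => absurd hc h
  rw [Finset.sum_congr rfl fun f _ => key f, ← Fintype.prod_sum q']
  have hcol : ∀ x', (∑ a', q' x' a') = if x' = x then q x a else 1 := by
    intro x'
    by_cases h : x' = x
    · subst h
      simp [hq']
    · simp [hq', h, h1 x']
  rw [Finset.prod_congr rfl fun x' _ => hcol x']
  simp

lemma induced_unsteerable {nA nX : ℕ} (M : Fin nA → Fin nX → Matrix (Fin dA) (Fin dA) ℂ)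
    (hMpsd : ∀ a x, (M a x).PosSemidef) (hMsum : ∀ x, ∑ a, M a x = 1)
    {S : Matrix (Fin dA × Fin dB) (Fin dA × Fin dB) ℂ} (hS : IsSeparableState S) :
    Unsteerable (inducedAssemblage M S) := by
  obtain ⟨k, w, σA, σB, hw0, hw1, hA, hB, hdec⟩ := hS
  set q : Fin k → Fin nX → Fin nA → ℂ := fun l x a => (M a x * σA l).trace with hq
  have hq0 : ∀ l x a, 0 ≤ q l x a := fun l x a => trace_mul_nonneg (hMpsd a x) (hA l).1
  have hqsum : ∀ l x, ∑ a, q l x a = 1 := by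
    intro l x
    have : ∑ a, (M a x * σA l).trace = ((∑ a, M a x) * σA l).trace := by
      rw [Finset.sum_mul, trace_sum]
    rw [hq]
    simp only []
    rw [this, hMsum x, one_mul, (hA l).2]
  refine ⟨fun f => ∑ l, ((w l : ℝ) : ℂ) • ((∏ x, q l x (f x)) • σB l), ?_, ?_⟩
  · intro f
    apply sum_psd
    intro l _
    apply smul_psd (by exact_mod_cast hw0 l)
    exact smul_psd (Finset.prod_nonneg fun x _ => hq0 l x (f x)) (hB l).1
  · intro a x
    have hL : inducedAssemblage M S a x = ∑ l, ((w l : ℝ) : ℂ) • (q l x a • σB l) := by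
      rw [inducedAssemblage, hdec, Finset.mul_sum, ptraceA_sum]
      refine Finset.sum_congr rfl fun l _ => ?_
      rw [Matrix.mul_smul, ptraceA_smul, ← Matrix.mul_kronecker_mul, Matrix.one_mul, ptraceA_kron]
    rw [hL]
    have hR : ∀ f : Fin nX → Fin nA,
        (if a = f x then ∑ l, ((w l : ℝ) : ℂ) • ((∏ x', q l x' (f x')) • σB l) else 0)
        = ∑ l, ((w l : ℝ) : ℂ) • ((if a = f x then ∏ x', q l x' (f x') else 0) • σB l) := by
      intro f
      by_cases h : a = f x <;> simp [h]
    rw [Finset.sum_congr rfl fun f _ => hR f, Finset.sum_comm]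
    refine Finset.sum_congr rfl fun l _ => ?_
    rw [← Finset.smul_sum, ← Finset.sum_smul, sum_ite_prod (q l) (hqsum l) x a]

end RSteerAux2

/-- The steering robustness of a bipartite state is bounded above by its generalized
robustness of entanglement. -/
theorem rsteer_le_rg {dA dB : ℕ}
    (ρ : Matrix (Fin dA × Fin dB) (Fin dA × Fin dB) ℂ)
    (hρ : ρ.PosSemidef) (htr : ρ.trace = 1) :
    Rsteer ρ ≤ Rg ρ := by
  classical
  have hdA : 0 < dA := by
    rcases Nat.eq_zero_or_pos dA with h | h
    · subst h; simp [Matrix.trace, Fintype.sum_prod_type] at htr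
    · exact h
  have hdB : 0 < dB := by
    rcases Nat.eq_zero_or_pos dB with h | h
    · subst h; simp [Matrix.trace, Fintype.sum_prod_type] at htr
    · exact h
  set c : ℝ := (dA : ℝ) * dB with hc
  have hdA1 : (1:ℝ) ≤ dA := by exact_mod_cast hdA
  have hdB1 : (1:ℝ) ≤ dB := by exact_mod_cast hdB
  have hc1 : 1 ≤ c := by nlinarith
  have hcpos : 0 < c := lt_of_lt_of_le one_pos hc1
  set κ : ℝ := (1 + c) / c with hκ
  have hκ1 : 1 ≤ κ := by rw [hκ, le_div_iff₀ hcpos]; linarith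
  have hsub := RSteerAux.psd_smul_one_sub hρ htr hκ1
  set τ0 : Matrix (Fin dA × Fin dB) (Fin dA × Fin dB) ℂ :=
    ((c⁻¹ : ℝ) : ℂ) • (((κ : ℝ) : ℂ) • 1 - ρ) with hτ0
  have hτ0psd : τ0.PosSemidef := by
    refine RSteerAux.smul_psd ?_ hsub
    rw [Complex.zero_le_real]
    positivity
  have hcard : ((Fintype.card (Fin dA × Fin dB) : ℂ)) = ((c : ℝ) : ℂ) := by
    rw [hc]
    push_cast [Fintype.card_prod, Fintype.card_fin]
    ring
  have hτ0tr : τ0.trace = 1 := by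
    rw [hτ0, Matrix.trace_smul, Matrix.trace_sub, Matrix.trace_smul, Matrix.trace_one, htr, hcard]
    rw [smul_eq_mul, smul_eq_mul,
      show ((κ : ℝ) : ℂ) * ((c : ℝ) : ℂ) - 1 = ((κ * c - 1 : ℝ) : ℂ) by push_cast; ring,
      ← Complex.ofReal_mul,
      show c⁻¹ * (κ * c - 1) = 1 from by rw [hκ]; field_simp; ring]
    exact Complex.ofReal_one
  have hmix : (((1 + c)⁻¹ : ℝ) : ℂ) • (ρ + ((c : ℝ) : ℂ) • τ0)
      = ((c⁻¹ : ℝ) : ℂ) • (1 : Matrix (Fin dA × Fin dB) (Fin dA × Fin dB) ℂ) := by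
    have h1 : ((c : ℝ) : ℂ) • τ0 = ((κ : ℝ) : ℂ) • 1 - ρ := by
      rw [hτ0, smul_smul, ← Complex.ofReal_mul, mul_inv_cancel₀ (ne_of_gt hcpos),
        Complex.ofReal_one, one_smul]
    rw [h1, add_sub_cancel, smul_smul, ← Complex.ofReal_mul]
    congr 2
    rw [hκ]
    have h1c : (1 + c) ≠ 0 := by positivity
    field_simp
  have hsepmix : IsSeparableState
      (((c⁻¹ : ℝ) : ℂ) • (1 : Matrix (Fin dA × Fin dB) (Fin dA × Fin dB) ℂ)) := by
    refine ⟨1, fun _ => 1, fun _ => (((dA : ℝ)⁻¹ : ℝ) : ℂ) • 1,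
      fun _ => (((dB : ℝ)⁻¹ : ℝ) : ℂ) • 1, fun _ => zero_le_one, by simp, ?_, ?_, ?_⟩
    · intro _
      constructor
      · refine RSteerAux.smul_psd ?_ Matrix.PosSemidef.one
        rw [Complex.zero_le_real]; positivity
      · rw [Matrix.trace_smul, Matrix.trace_one, smul_eq_mul, Fintype.card_fin]
        rw [← Complex.ofReal_natCast, ← Complex.ofReal_mul,
          inv_mul_cancel₀ (by positivity : (dA:ℝ) ≠ 0), Complex.ofReal_one]
    · intro _
      constructor
      · refine RSteerAux.smul_psd ?_ Matrix.PosSemidef.one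
        rw [Complex.zero_le_real]; positivity
      · rw [Matrix.trace_smul, Matrix.trace_one, smul_eq_mul, Fintype.card_fin]
        rw [← Complex.ofReal_natCast, ← Complex.ofReal_mul,
          inv_mul_cancel₀ (by positivity : (dB:ℝ) ≠ 0), Complex.ofReal_one]
    · rw [Fin.sum_univ_one, Complex.ofReal_one, one_smul, Matrix.smul_kronecker,
        Matrix.kronecker_smul, Matrix.one_kronecker_one, smul_smul, ← Complex.ofReal_mul]
      congr 2
      rw [hc, mul_inv]
  have hSne : Set.Nonempty {t : ℝ | 0 ≤ t ∧
      ∃ τ : Matrix (Fin dA × Fin dB) (Fin dA × Fin dB) ℂ,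
      τ.PosSemidef ∧ τ.trace = 1 ∧
      IsSeparableState ((((1 + t)⁻¹ : ℝ) : ℂ) • (ρ + ((t : ℝ) : ℂ) • τ))} :=
    ⟨c, le_of_lt hcpos, τ0, hτ0psd, hτ0tr, by rw [hmix]; exact hsepmix⟩
  have hRg0 : 0 ≤ Rg ρ := Real.sInf_nonneg fun t ht => ht.1
  rw [Rsteer]
  apply Real.sSup_le _ hRg0
  rintro r ⟨nA, nX, M, hMpsd, hMsum, rfl⟩
  rw [Rg]
  apply le_csInf hSne
  rintro t ⟨ht0, τ, hτpsd, hτtr, hsep'⟩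
  rw [SteeringRobustness]
  apply csInf_le ⟨0, fun s hs => hs.1⟩
  have key : ∀ (Z : Matrix (Fin dA × Fin dB) (Fin dA × Fin dB) ℂ) (x : Fin nX),
      ∑ a, inducedAssemblage M Z a x = ptraceA Z := by
    intro Z x
    simp only [inducedAssemblage]
    have hks : (∑ a, M a x) ⊗ₖ (1 : Matrix (Fin dB) (Fin dB) ℂ) = ∑ a, (M a x ⊗ₖ 1) := by
      ext pq rs
      obtain ⟨p, q⟩ := pq; obtain ⟨r, s⟩ := rs
      simp [Matrix.sum_apply, Finset.sum_mul]
    rw [← RSteerAux2.ptraceA_sum, ← Finset.sum_mul, ← hks, hMsum,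
      Matrix.one_kronecker_one, Matrix.one_mul]
  refine ⟨ht0, inducedAssemblage M τ,
    ⟨fun a x => RSteerAux2.induced_psd (hMpsd a x) hτpsd,
     fun x x' => by rw [key τ x, key τ x'],
     fun x => by rw [key τ x, RSteerAux2.trace_ptraceA, hτtr]⟩, ?_⟩
  have hfun : (fun (a : Fin nA) (x : Fin nX) =>
      (((1 + t)⁻¹ : ℝ) : ℂ) • (inducedAssemblage M ρ a x + ((t : ℝ) : ℂ) • inducedAssemblage M τ a x))
      = inducedAssemblage M ((((1 + t)⁻¹ : ℝ) : ℂ) • (ρ + ((t : ℝ) : ℂ) • τ)) := by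
    funext a x
    simp only [inducedAssemblage]
    rw [Matrix.mul_smul, RSteerAux2.ptraceA_smul, Matrix.mul_add, RSteerAux2.ptraceA_add,
      Matrix.mul_smul, RSteerAux2.ptraceA_smul]
  rw [hfun]
  exact RSteerAux2.induced_unsteerable M hMpsd hMsum hsep'
end

section
/- If ρ_AB is unsteerable (every measurement assemblage on A induces an unsteerable assemblage on B), then for any instrument {Λ_a} on B and any one-way LOCC measurement Q_a = Σ_x M_{a|x} ⊗ N_x (measurement {N_x} on the output of B with outcomes forwarded to choose measurement {M_{a|x}} on A), the success probability Σ_a Tr(Q_a (id_A ⊗ Λ_a)[ρ_AB]) is at most p_corr^NE({Λ_a}) = max_ρ max_{POVM {Q_b}} Σ_a Tr(Q_a Λ_a[ρ]), the optimal success probability without entanglement. -/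
open Matrix BigOperators
open scoped ComplexOrder

open Kronecker

/-- Complete positivity via Kraus decomposition. -/
def IsCP {dB dC : ℕ}
    (Λ : Matrix (Fin dB) (Fin dB) ℂ →ₗ[ℂ] Matrix (Fin dC) (Fin dC) ℂ) : Prop :=
  ∃ (r : ℕ) (K : Fin r → Matrix (Fin dC) (Fin dB) ℂ),
    ∀ ρ, Λ ρ = ∑ i, K i * ρ * (K i)ᴴ

/-- The map `id_A ⊗ Λ` acting blockwise on a bipartite matrix. -/
noncomputable def idTensor {dA dB dC : ℕ}
    (Λ : Matrix (Fin dB) (Fin dB) ℂ →ₗ[ℂ] Matrix (Fin dC) (Fin dC) ℂ)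
    (M : Matrix (Fin dA × Fin dB) (Fin dA × Fin dB) ℂ) :
    Matrix (Fin dA × Fin dC) (Fin dA × Fin dC) ℂ :=
  Matrix.of fun p q => Λ (Matrix.of fun b b' => M (p.1, b) (q.1, b')) p.2 q.2

/-- Optimal success probability of subchannel discrimination without entanglement. -/
noncomputable def pNE {dB dC k : ℕ}
    (Λ : Fin k → (Matrix (Fin dB) (Fin dB) ℂ →ₗ[ℂ] Matrix (Fin dC) (Fin dC) ℂ)) : ℝ :=
  sSup {r : ℝ | ∃ (ρ : Matrix (Fin dB) (Fin dB) ℂ) (Q : Fin k → Matrix (Fin dC) (Fin dC) ℂ),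
    ρ.PosSemidef ∧ ρ.trace = 1 ∧
    (∀ b, (Q b).PosSemidef) ∧ (∑ b, Q b = 1) ∧
    r = (∑ a, ((Q a) * (Λ a) ρ).trace).re}

lemma ptraceA_eq_sum {dA dB : ℕ} (M : Matrix (Fin dA) (Fin dA) ℂ)
    (ρ : Matrix (Fin dA × Fin dB) (Fin dA × Fin dB) ℂ) :
    ptraceA ((M ⊗ₖ (1 : Matrix (Fin dB) (Fin dB) ℂ)) * ρ)
      = ∑ α : Fin dA, ∑ α' : Fin dA,
          M α α' • (Matrix.of fun b b' => ρ (α', b) (α, b')) := by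
  ext i j
  simp only [ptraceA, Matrix.of_apply, Matrix.mul_apply, Matrix.kroneckerMap_apply,
    Fintype.sum_prod_type, Matrix.one_apply, Finset.sum_apply, Matrix.smul_apply,
    mul_ite, mul_one, mul_zero, ite_mul, zero_mul, smul_eq_mul]
  simp only [Matrix.sum_apply, Matrix.smul_apply, Matrix.of_apply, smul_eq_mul,
    Finset.sum_ite_eq, Finset.mem_univ, if_true]

lemma sum4_comm {ι κ : Type*} [Fintype ι] [Fintype κ] (f : ι → ι → κ → κ → ℂ) :
    ∑ c : κ, ∑ c' : κ, ∑ α : ι, ∑ α' : ι, f α α' c c'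
      = ∑ α, ∑ α', ∑ c, ∑ c', f α α' c c' :=
  calc ∑ c : κ, ∑ c' : κ, ∑ α : ι, ∑ α' : ι, f α α' c c'
      = ∑ c, ∑ α, ∑ c', ∑ α', f α α' c c' :=
        Finset.sum_congr rfl fun _ _ => Finset.sum_comm
    _ = ∑ α, ∑ c, ∑ c', ∑ α', f α α' c c' := Finset.sum_comm
    _ = ∑ α, ∑ c, ∑ α', ∑ c', f α α' c c' :=
        Finset.sum_congr rfl fun _ _ => Finset.sum_congr rfl fun _ _ => Finset.sum_comm
    _ = ∑ α, ∑ α', ∑ c, ∑ c', f α α' c c' :=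
        Finset.sum_congr rfl fun _ _ => Finset.sum_comm

lemma trace_kron_idTensor {dA dB dC : ℕ}
    (Λ : Matrix (Fin dB) (Fin dB) ℂ →ₗ[ℂ] Matrix (Fin dC) (Fin dC) ℂ)
    (M : Matrix (Fin dA) (Fin dA) ℂ) (N : Matrix (Fin dC) (Fin dC) ℂ)
    (ρ : Matrix (Fin dA × Fin dB) (Fin dA × Fin dB) ℂ) :
    ((M ⊗ₖ N) * idTensor Λ ρ).trace
      = (N * Λ (ptraceA ((M ⊗ₖ (1 : Matrix (Fin dB) (Fin dB) ℂ)) * ρ))).trace := by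
  rw [ptraceA_eq_sum]
  simp only [map_sum, _root_.map_smul, Finset.mul_sum, Matrix.trace_sum, Matrix.mul_smul,
    Matrix.trace_smul, smul_eq_mul]
  -- RHS is now ∑ α, ∑ α', M α α' * (N * Λ (blk α' α)).trace
  have hrhs : ∀ (α α' : Fin dA),
      (N * Λ (Matrix.of fun b b' => ρ (α', b) (α, b'))).trace
        = ∑ c : Fin dC, ∑ c' : Fin dC,
            N c c' * Λ (Matrix.of fun b b' => ρ (α', b) (α, b')) c' c := by
    intro α α'
    simp [Matrix.trace, Matrix.diag, Matrix.mul_apply]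
  simp only [hrhs]
  -- LHS
  simp only [Matrix.trace, Matrix.diag, Matrix.mul_apply, Matrix.kroneckerMap_apply,
    idTensor, Matrix.of_apply, Fintype.sum_prod_type]
  refine Finset.sum_congr rfl fun α _ => ?_
  rw [Finset.sum_comm]
  refine Finset.sum_congr rfl fun α' _ => ?_
  rw [Finset.mul_sum]
  refine Finset.sum_congr rfl fun c _ => ?_
  rw [Finset.mul_sum]
  refine Finset.sum_congr rfl fun c' _ => ?_
  ring



lemma psd_diag_nonneg {A : Matrix (Fin n) (Fin n) ℂ} (h : A.PosSemidef) (i : Fin n) :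
    0 ≤ A i i := by simpa [dotProduct, Pi.single_apply] using h.dotProduct_mulVec_nonneg (Pi.single i 1)

lemma psd_trace_nonneg {A : Matrix (Fin n) (Fin n) ℂ} (h : A.PosSemidef) : 0 ≤ A.trace :=
  Finset.sum_nonneg fun i _ => psd_diag_nonneg h i

lemma psd_trace_real {A : Matrix (Fin n) (Fin n) ℂ} (h : A.PosSemidef) :
    A.trace = ((A.trace.re : ℝ) : ℂ) := by
  have h0 := psd_trace_nonneg h
  rw [Complex.le_def] at h0
  exact Complex.ext (by simp) (by simp [h0.2.symm])

lemma psd_sum {ι : Type*} (s : Finset ι) (f : ι → Matrix (Fin n) (Fin n) ℂ)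
    (h : ∀ i ∈ s, (f i).PosSemidef) : (∑ i ∈ s, f i).PosSemidef := by
  classical
  induction s using Finset.induction with
  | empty => simpa using Matrix.PosSemidef.zero
  | insert _ _ hx ih =>
    rw [Finset.sum_insert hx]
    exact (h _ (Finset.mem_insert_self _ _)).add (ih fun i hi => h i (Finset.mem_insert_of_mem hi))

lemma psd_smul {A : Matrix (Fin n) (Fin n) ℂ} (h : A.PosSemidef) {c : ℝ} (hc : 0 ≤ c) :
    (((c : ℝ) : ℂ) • A).PosSemidef := by
  refine Matrix.PosSemidef.of_dotProduct_mulVec_nonneg ?_ ?_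
  · unfold Matrix.IsHermitian
    rw [Matrix.conjTranspose_smul, h.1.eq]
    congr 1
    simp
  · intro x
    have := h.dotProduct_mulVec_nonneg x
    rw [Matrix.smul_mulVec, dotProduct_smul]
    exact smul_nonneg (by exact_mod_cast Complex.zero_le_real.mpr hc) this

lemma psd_eq_conjTranspose_mul_self {A : Matrix (Fin n) (Fin n) ℂ} (h : A.PosSemidef) :
    ∃ B : Matrix (Fin n) (Fin n) ℂ, A = Bᴴ * B := by
  open scoped MatrixOrder in
  obtain ⟨B, hB⟩ := CStarAlgebra.nonneg_iff_eq_star_mul_self.mp h.nonneg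
  exact ⟨B, hB⟩

lemma psd_trace_zero_eq_zero {A : Matrix (Fin n) (Fin n) ℂ} (h : A.PosSemidef)
    (ht : A.trace = 0) : A = 0 := by
  obtain ⟨B, rfl⟩ := psd_eq_conjTranspose_mul_self h
  have hB : B = 0 := by
    have htr' : ∑ p : Fin n × Fin n, Complex.normSq (B p.2 p.1) = 0 := by
      have htr : ∑ j : Fin n, ∑ i : Fin n, (starRingEnd ℂ) (B i j) * B i j = 0 := by
        simpa [Matrix.trace, Matrix.diag, Matrix.mul_apply, Matrix.conjTranspose_apply] using ht
      have := congrArg Complex.re htr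
      simpa [Fintype.sum_prod_type, Complex.normSq_apply,
        Complex.mul_re, Complex.mul_im] using this
    have hz := (Finset.sum_eq_zero_iff_of_nonneg
      (fun p _ => Complex.normSq_nonneg (B p.2 p.1))).mp htr'
    ext i j
    have := hz (j, i) (Finset.mem_univ _)
    simpa using Complex.normSq_eq_zero.mp this
  simp [hB]

lemma trace_mul_psd_nonneg {A B : Matrix (Fin n) (Fin n) ℂ} (hA : A.PosSemidef)
    (hB : B.PosSemidef) : 0 ≤ (A * B).trace := by
  obtain ⟨C, rfl⟩ := psd_eq_conjTranspose_mul_self hB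
  have : A * (Cᴴ * C) = (A * Cᴴ) * C := by rw [Matrix.mul_assoc]
  rw [this, Matrix.trace_mul_comm, ← Matrix.mul_assoc]
  exact psd_trace_nonneg (hA.mul_mul_conjTranspose_same C)


lemma cp_psd {dB dC : ℕ} {Λ : Matrix (Fin dB) (Fin dB) ℂ →ₗ[ℂ] Matrix (Fin dC) (Fin dC) ℂ}
    (hCP : IsCP Λ) {ρ : Matrix (Fin dB) (Fin dB) ℂ} (hρ : ρ.PosSemidef) :
    ((Λ) ρ).PosSemidef := by
  obtain ⟨r, K, hK⟩ := hCP
  rw [hK]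
  exact psd_sum _ _ fun i _ => hρ.mul_mul_conjTranspose_same (K i)

lemma trace_ptraceA {dA dB : ℕ} (ρ : Matrix (Fin dA × Fin dB) (Fin dA × Fin dB) ℂ) :
    (ptraceA ρ).trace = ρ.trace := by
  simp only [ptraceA, Matrix.trace, Matrix.diag, Matrix.of_apply, Fintype.sum_prod_type]
  exact Finset.sum_comm

/-- If `ρ_AB` is unsteerable, then for any instrument on `B` and any one-way
(B→A) LOCC measurement, the subchannel-discrimination success probability does not
exceed the optimal success probability without entanglement. -/
theorem unsteerable_state_useless_for_oneway_discrimination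
    {dA dB dC k nX : ℕ}
    (ρAB : Matrix (Fin dA × Fin dB) (Fin dA × Fin dB) ℂ)
    (hρ : ρAB.PosSemidef) (htr : ρAB.trace = 1)
    (hUnst : ∀ (nA nX' : ℕ) (M : Fin nA → Fin nX' → Matrix (Fin dA) (Fin dA) ℂ),
      (∀ a x, (M a x).PosSemidef) → (∀ x, ∑ a, M a x = 1) →
      Unsteerable (inducedAssemblage M ρAB))
    (Λ : Fin k → (Matrix (Fin dB) (Fin dB) ℂ →ₗ[ℂ] Matrix (Fin dC) (Fin dC) ℂ))
    (hCP : ∀ a, IsCP (Λ a))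
    (hTP : ∀ ρ : Matrix (Fin dB) (Fin dB) ℂ, ∑ a, ((Λ a) ρ).trace = ρ.trace)
    (N : Fin nX → Matrix (Fin dC) (Fin dC) ℂ)
    (hN : ∀ x, (N x).PosSemidef) (hNsum : ∑ x, N x = 1)
    (M : Fin k → Fin nX → Matrix (Fin dA) (Fin dA) ℂ)
    (hM : ∀ a x, (M a x).PosSemidef) (hMsum : ∀ x, ∑ a, M a x = 1) :
    (∑ a, (((∑ x, M a x ⊗ₖ N x) * idTensor (Λ a) ρAB)).trace).re ≤ pNE Λ := by
  classical
  -- nontriviality of dimensions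
  have hABne : Nonempty (Fin dA × Fin dB) := by
    by_contra h
    rw [not_nonempty_iff] at h
    rw [Matrix.trace, Finset.univ_eq_empty, Finset.sum_empty] at htr
    exact zero_ne_one htr
  have hBne : Nonempty (Fin dB) := hABne.elim fun p => ⟨p.2⟩
  have hCne : Nonempty (Fin dC) := by
    by_contra h
    rw [not_nonempty_iff] at h
    have h1 := hTP 1
    rw [Matrix.trace_one] at h1
    have h2 : ∀ a, ((Λ a) 1).trace = 0 := fun a => by
      rw [Matrix.trace, Finset.univ_eq_empty, Finset.sum_empty]
    rw [Finset.sum_congr rfl fun a _ => h2 a, Finset.sum_const, smul_zero] at h1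
    have h3 : (Fintype.card (Fin dB) : ℂ) ≠ 0 := by
      have : 0 < Fintype.card (Fin dB) := Fintype.card_pos_iff.mpr hBne
      exact_mod_cast Nat.cast_ne_zero.mpr this.ne'
    exact h3 h1.symm
  have hXne : Nonempty (Fin nX) := by
    by_contra h
    rw [not_nonempty_iff] at h
    rw [Finset.univ_eq_empty, Finset.sum_empty] at hNsum
    obtain ⟨c⟩ := hCne
    have := congrFun (congrFun hNsum c) c
    simp [Matrix.one_apply] at this
  obtain ⟨σ, hσpos, hσeq⟩ := hUnst k nX M hM hMsum
  obtain ⟨x0⟩ := hXne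
  -- the weights sum to one
  have hsumσ : ∑ f : Fin nX → Fin k, σ f = ptraceA ρAB := by
    have h1 : ∑ a, inducedAssemblage M ρAB a x0 = ∑ f : Fin nX → Fin k, σ f := by
      rw [Finset.sum_congr rfl fun a _ => hσeq a x0, Finset.sum_comm]
      exact Finset.sum_congr rfl fun f _ => by simp
    have h2 : ∑ a, inducedAssemblage M ρAB a x0 = ptraceA ρAB := by
      unfold inducedAssemblage
      rw [Finset.sum_congr rfl fun a _ => ptraceA_eq_sum (M a x0) ρAB]
      ext i j
      simp only [Matrix.sum_apply, Matrix.smul_apply, Matrix.of_apply, smul_eq_mul, ptraceA]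
      rw [Finset.sum_comm]
      refine Finset.sum_congr rfl fun α _ => ?_
      rw [Finset.sum_comm]
      have : ∀ α' : Fin dA, ∑ a, M a x0 α α' * ρAB (α', i) (α, j)
          = (if α = α' then (1:ℂ) else 0) * ρAB (α', i) (α, j) := by
        intro α'
        rw [← Finset.sum_mul]
        congr 1
        have := congrFun (congrFun (hMsum x0) α) α'
        rw [Matrix.sum_apply] at this
        rw [this, Matrix.one_apply]
      rw [Finset.sum_congr rfl fun α' _ => this α']
      simp
    rw [← h1, h2]
  have htσ : ∑ f : Fin nX → Fin k, (σ f).trace = 1 := by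
    rw [← Matrix.trace_sum, hsumσ, trace_ptraceA, htr]
  have htσre : ∑ f : Fin nX → Fin k, ((σ f).trace).re = 1 := by
    have := congrArg Complex.re htσ
    simpa [Complex.re_sum] using this
  -- boundedness of the pNE feasible set
  have hb : BddAbove {r : ℝ | ∃ (ρ : Matrix (Fin dB) (Fin dB) ℂ)
      (Q : Fin k → Matrix (Fin dC) (Fin dC) ℂ),
      ρ.PosSemidef ∧ ρ.trace = 1 ∧
      (∀ b, (Q b).PosSemidef) ∧ (∑ b, Q b = 1) ∧
      r = (∑ a, ((Q a) * (Λ a) ρ).trace).re} := by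
    refine ⟨1, ?_⟩
    rintro r ⟨ρ, Q, hρ', htr', hQ', hQsum', rfl⟩
    have hle : ∀ a, ((Q a * (Λ a) ρ).trace).re ≤ (((Λ a) ρ).trace).re := by
      intro a
      have hpsd : ((Λ a) ρ).PosSemidef := cp_psd (hCP a) hρ'
      have h1Q : ((1 : Matrix (Fin dC) (Fin dC) ℂ) - Q a).PosSemidef := by
        have he : (1 : Matrix (Fin dC) (Fin dC) ℂ) - Q a = ∑ b ∈ Finset.univ.erase a, Q b := by
          rw [← hQsum', ← Finset.add_sum_erase _ Q (Finset.mem_univ a)]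
          abel
        rw [he]
        exact psd_sum _ _ fun b _ => hQ' b
      have hnn := trace_mul_psd_nonneg h1Q hpsd
      rw [Matrix.sub_mul, Matrix.one_mul, Matrix.trace_sub] at hnn
      have h4 := (Complex.le_def.mp hnn).1
      simp only [Complex.zero_re, Complex.sub_re] at h4
      linarith
    calc (∑ a, ((Q a) * (Λ a) ρ).trace).re
        = ∑ a, ((Q a * (Λ a) ρ).trace).re := Complex.re_sum _ _
      _ ≤ ∑ a, (((Λ a) ρ).trace).re := Finset.sum_le_sum fun a _ => hle a
      _ = (∑ a, ((Λ a) ρ).trace).re := (Complex.re_sum _ _).symm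
      _ = 1 := by rw [hTP ρ, htr']; simp
  have hpNE : pNE Λ = sSup {r : ℝ | ∃ (ρ : Matrix (Fin dB) (Fin dB) ℂ)
      (Q : Fin k → Matrix (Fin dC) (Fin dC) ℂ),
      ρ.PosSemidef ∧ ρ.trace = 1 ∧
      (∀ b, (Q b).PosSemidef) ∧ (∑ b, Q b = 1) ∧
      r = (∑ a, ((Q a) * (Λ a) ρ).trace).re} := rfl
  -- rewrite the LHS
  have hstep1 : (∑ a, (((∑ x, M a x ⊗ₖ N x) * idTensor (Λ a) ρAB)).trace).re
      = ∑ a, ∑ x, ((N x * (Λ a) (inducedAssemblage M ρAB a x)).trace).re := by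
    rw [Complex.re_sum]
    refine Finset.sum_congr rfl fun a _ => ?_
    rw [Finset.sum_mul, Matrix.trace_sum, Complex.re_sum]
    refine Finset.sum_congr rfl fun x _ => ?_
    rw [trace_kron_idTensor]
    rfl
  have hstep2 : ∀ a x, ((N x * (Λ a) (inducedAssemblage M ρAB a x)).trace).re
      = ∑ f : Fin nX → Fin k, (if a = f x then ((N x * (Λ a) (σ f)).trace).re else 0) := by
    intro a x
    rw [hσeq a x, map_sum, Finset.mul_sum, Matrix.trace_sum, Complex.re_sum]
    refine Finset.sum_congr rfl fun f _ => ?_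
    by_cases h : a = f x
    · simp [h]
    · simp [h]
  have hstep3 : ∑ a, ∑ x, ∑ f : Fin nX → Fin k,
        (if a = f x then ((N x * (Λ a) (σ f)).trace).re else 0)
      = ∑ f : Fin nX → Fin k, ∑ x, ((N x * (Λ (f x)) (σ f)).trace).re := by
    rw [Finset.sum_congr rfl fun a (_ : a ∈ Finset.univ) => Finset.sum_comm, Finset.sum_comm]
    refine Finset.sum_congr rfl fun f _ => ?_
    rw [Finset.sum_comm]
    refine Finset.sum_congr rfl fun x _ => ?_
    simp
  rw [hstep1]
  rw [Finset.sum_congr rfl fun a (_ : a ∈ Finset.univ) =>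
    Finset.sum_congr rfl fun x (_ : x ∈ Finset.univ) => hstep2 a x, hstep3]
  -- per-deterministic-strategy bound
  have hkey : ∀ f : Fin nX → Fin k,
      ∑ x, ((N x * (Λ (f x)) (σ f)).trace).re ≤ ((σ f).trace).re * pNE Λ := by
    intro f
    by_cases h0 : (σ f).trace = 0
    · have hz : σ f = 0 := psd_trace_zero_eq_zero (hσpos f) h0
      simp [hz, h0]
    · set t : ℝ := ((σ f).trace).re with ht
      have htreal : (σ f).trace = (t : ℂ) := psd_trace_real (hσpos f)
      have ht0 : 0 < t := by
        rcases lt_or_eq_of_le (Complex.zero_le_real.mp (htreal ▸ psd_trace_nonneg (hσpos f)))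
          with h | h
        · exact h
        · exact absurd (by rw [htreal, ← h, Complex.ofReal_zero]) h0
      set ρf : Matrix (Fin dB) (Fin dB) ℂ := ((t⁻¹ : ℝ) : ℂ) • σ f with hρf
      have hρfpsd : ρf.PosSemidef := psd_smul (hσpos f) (inv_nonneg.mpr ht0.le)
      have hρftr : ρf.trace = 1 := by
        rw [hρf, Matrix.trace_smul, htreal, smul_eq_mul, ← Complex.ofReal_mul,
          inv_mul_cancel₀ ht0.ne', Complex.ofReal_one]
      set Q : Fin k → Matrix (Fin dC) (Fin dC) ℂ :=
        fun b => ∑ x, if f x = b then N x else 0 with hQdef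
      have hQpsd : ∀ b, (Q b).PosSemidef := by
        intro b
        refine psd_sum _ _ fun x _ => ?_
        by_cases h : f x = b
        · simpa [h] using hN x
        · simpa [h] using Matrix.PosSemidef.zero
      have hQsum : ∑ b, Q b = 1 := by
        rw [hQdef, Finset.sum_comm]
        have hx : ∀ x : Fin nX, (∑ b, if f x = b then N x else 0) = N x := fun x => by simp
        rw [Finset.sum_congr rfl fun x _ => hx x]
        exact hNsum
      have hmem : (∑ a, ((Q a) * (Λ a) ρf).trace).re ∈
          {r : ℝ | ∃ (ρ : Matrix (Fin dB) (Fin dB) ℂ)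
            (Q : Fin k → Matrix (Fin dC) (Fin dC) ℂ),
            ρ.PosSemidef ∧ ρ.trace = 1 ∧
            (∀ b, (Q b).PosSemidef) ∧ (∑ b, Q b = 1) ∧
            r = (∑ a, ((Q a) * (Λ a) ρ).trace).re} :=
        ⟨ρf, Q, hρfpsd, hρftr, hQpsd, hQsum, rfl⟩
      have hle := le_csSup hb hmem
      rw [← hpNE] at hle
      have hval : (∑ a, ((Q a) * (Λ a) ρf).trace).re
          = t⁻¹ * ∑ x, ((N x * (Λ (f x)) (σ f)).trace).re := by
        rw [Complex.re_sum, Finset.mul_sum]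
        have h1 : ∀ a, ((Q a * (Λ a) ρf).trace).re
            = ∑ x, (if f x = a then t⁻¹ * ((N x * (Λ (f x)) (σ f)).trace).re else 0) := by
          intro a
          rw [hQdef]
          rw [Finset.sum_mul, Matrix.trace_sum, Complex.re_sum]
          refine Finset.sum_congr rfl fun x _ => ?_
          by_cases h : f x = a
          · subst h
            rw [if_pos rfl, if_pos rfl, hρf, _root_.map_smul, Matrix.mul_smul,
              Matrix.trace_smul, smul_eq_mul, Complex.re_ofReal_mul]
          · simp [h]
        rw [Finset.sum_congr rfl fun a _ => h1 a, Finset.sum_comm]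
        refine Finset.sum_congr rfl fun x _ => ?_
        simp
      rw [hval] at hle
      have := mul_le_mul_of_nonneg_left hle ht0.le
      calc ∑ x, ((N x * (Λ (f x)) (σ f)).trace).re
          = t * (t⁻¹ * ∑ x, ((N x * (Λ (f x)) (σ f)).trace).re) := by
            rw [← mul_assoc, mul_inv_cancel₀ ht0.ne', one_mul]
        _ ≤ t * pNE Λ := this
  calc ∑ f : Fin nX → Fin k, ∑ x, ((N x * (Λ (f x)) (σ f)).trace).re
      ≤ ∑ f : Fin nX → Fin k, ((σ f).trace).re * pNE Λ :=
        Finset.sum_le_sum fun f _ => hkey f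
    _ = (∑ f : Fin nX → Fin k, ((σ f).trace).re) * pNE Λ := by rw [Finset.sum_mul]
    _ = pNE Λ := by rw [htσre, one_mul]
end

section
/- Saturation of the dual SDP constraint: if {F_{a|x}} is an optimal solution to the dual SDP maximize Σ_{a,x} Tr(F_{a|x}ρ_{a|x}) subject to F_{a|x} ≥ 0 and Σ_{a,x} D(a|x,λ)F_{a|x} ≤ 1 for all deterministic λ, then the F_{a|x} can be chosen so that there exist a deterministic strategy λ and a unit vector |φ⟩ with Σ_{a,x} D(a|x,λ) ⟨φ| F_{a|x} |φ⟩ = 1. -/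
open Matrix BigOperators
open scoped ComplexOrder

lemma dot_sum_mulVec {n : ℕ} {ι : Type*} (s : Finset ι) (M : ι → Matrix (Fin n) (Fin n) ℂ)
    (φ : Fin n → ℂ) :
    star φ ⬝ᵥ (∑ i ∈ s, M i) *ᵥ φ = ∑ i ∈ s, star φ ⬝ᵥ (M i) *ᵥ φ := by
  induction s using Finset.cons_induction with
  | empty => simp [Matrix.zero_mulVec]
  | cons a s ha ih => simp [Finset.sum_cons, Matrix.add_mulVec, dotProduct_add, ih]

lemma sum_posSemidef {n : ℕ} {ι : Type*} (s : Finset ι) (M : ι → Matrix (Fin n) (Fin n) ℂ)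
    (h : ∀ i ∈ s, (M i).PosSemidef) : (∑ i ∈ s, M i).PosSemidef := by
  induction s using Finset.cons_induction with
  | empty => simpa using (Matrix.PosSemidef.zero : (0 : Matrix (Fin n) (Fin n) ℂ).PosSemidef)
  | cons a s ha ih =>
    rw [Finset.sum_cons]
    exact (h a (Finset.mem_cons_self a s)).add (ih fun i hi => h i (Finset.mem_cons_of_mem hi))

lemma posSemidef_real_smul {n : ℕ} {M : Matrix (Fin n) (Fin n) ℂ} (hM : M.PosSemidef)
    {r : ℝ} (hr : 0 ≤ r) : (((r : ℂ)) • M).PosSemidef := by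
  refine Matrix.PosSemidef.of_dotProduct_mulVec_nonneg ?_ ?_
  · unfold Matrix.IsHermitian
    rw [Matrix.conjTranspose_smul, hM.1.eq]
    simp [Complex.conj_ofReal]
  · intro x
    rw [Matrix.smul_mulVec, dotProduct_smul]
    exact mul_nonneg (Complex.zero_le_real.2 hr) (hM.dotProduct_mulVec_nonneg x)

lemma saturate_or_scale {n : ℕ} (S : Matrix (Fin n) (Fin n) ℂ)
    (hS : S.PosSemidef) (hle : ((1 : Matrix (Fin n) (Fin n) ℂ) - S).PosSemidef) :
    (∃ φ : Fin n → ℂ, star φ ⬝ᵥ φ = 1 ∧ star φ ⬝ᵥ S *ᵥ φ = 1) ∨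
    (∃ ε : ℝ, 0 < ε ∧ ((1 : Matrix (Fin n) (Fin n) ℂ) - ((1+ε : ℝ) : ℂ) • S).PosSemidef) := by
  have hH : S.IsHermitian := hS.1
  set μ : Fin n → ℝ := hH.eigenvalues with hμ
  set v : Fin n → (Fin n → ℂ) := fun i => ⇑(hH.eigenvectorBasis i) with hv
  have hunit : ∀ i, star (v i) ⬝ᵥ (v i) = 1 := by
    intro i
    have := (EuclideanSpace.inner_eq_star_dotProduct (hH.eigenvectorBasis i)
      (hH.eigenvectorBasis i)).symm
    rw [inner_self_eq_norm_sq_to_K, hH.eigenvectorBasis.orthonormal.1 i] at this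
    simp at this
    rw [dotProduct_comm] at this
    exact this
  have hquad : ∀ i, star (v i) ⬝ᵥ S *ᵥ (v i) = (μ i : ℂ) := by
    intro i
    rw [hv]
    rw [hH.mulVec_eigenvectorBasis i]
    rw [show (hH.eigenvalues i) • ⇑(hH.eigenvectorBasis i)
        = ((hH.eigenvalues i : ℂ)) • ⇑(hH.eigenvectorBasis i) from by
      ext j; simp [Complex.real_smul]]
    rw [dotProduct_smul]
    rw [show star (v i) ⬝ᵥ (v i) = 1 from hunit i]
    simp [hμ]
  have hμ0 : ∀ i, 0 ≤ μ i := fun i => hS.eigenvalues_nonneg i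
  have hμ1 : ∀ i, μ i ≤ 1 := by
    intro i
    have h0 := hle.dotProduct_mulVec_nonneg (v i)
    rw [Matrix.sub_mulVec, dotProduct_sub, Matrix.one_mulVec, hunit i, hquad i] at h0
    have h0' : (0:ℂ) ≤ ((1 - μ i : ℝ) : ℂ) := by push_cast; convert h0 using 1
    have := Complex.zero_le_real.mp h0'
    linarith
  by_cases hone : ∃ i, μ i = 1
  · obtain ⟨i, hi⟩ := hone
    exact Or.inl ⟨v i, hunit i, by rw [hquad i, hi]; norm_num⟩
  · push_neg at hone
    right
    rcases Nat.eq_zero_or_pos n with hn | hn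
    · refine ⟨1, one_pos, ?_⟩
      subst hn
      have : ((1 : Matrix (Fin 0) (Fin 0) ℂ) - ((1+1 : ℝ) : ℂ) • S) = 0 := by
        ext i j; exact i.elim0
      rw [this]; exact Matrix.PosSemidef.zero
    · have hne : (Finset.univ : Finset (Fin n)).Nonempty := by
        simpa [Finset.univ_nonempty_iff] using Fin.pos_iff_nonempty.mp hn
      set ε : ℝ := Finset.univ.inf' hne (fun i => 1 - μ i) with hε
      have hεpos : 0 < ε := by
        rw [hε, Finset.lt_inf'_iff]
        intro i _
        have := lt_of_le_of_ne (hμ1 i) (hone i)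
        linarith
      have hεle : ∀ i, ε ≤ 1 - μ i := fun i => Finset.inf'_le _ (Finset.mem_univ i)
      refine ⟨ε, hεpos, ?_⟩
      have hentry : ∀ i, 0 ≤ 1 - (1+ε) * μ i := by
        intro i
        have h1 := hεle i
        have h2 := hμ0 i
        have h3 := hμ1 i
        nlinarith
      set U : Matrix (Fin n) (Fin n) ℂ := (hH.eigenvectorUnitary : Matrix (Fin n) (Fin n) ℂ) with hU
      have hUU : U * star U = 1 := Matrix.mem_unitaryGroup_iff.mp hH.eigenvectorUnitary.2
      have key : (1 : Matrix (Fin n) (Fin n) ℂ) - ((1+ε : ℝ) : ℂ) • S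
          = U * diagonal (fun i => ((1 - (1+ε) * μ i : ℝ) : ℂ)) * star U := by
        have hdiag : diagonal (fun i => ((1 - (1+ε) * μ i : ℝ) : ℂ))
            = (1 : Matrix (Fin n) (Fin n) ℂ)
              - ((1+ε : ℝ) : ℂ) • diagonal (RCLike.ofReal ∘ μ) := by
          ext i j
          rcases eq_or_ne i j with rfl | h
          · simp only [Matrix.diagonal_apply_eq, Matrix.sub_apply, Matrix.one_apply_eq,
              Matrix.smul_apply, Function.comp_apply, smul_eq_mul]
            push_cast
            ring_nf
            rfl
          · simp [Matrix.diagonal_apply_ne _ h, Matrix.one_apply_ne h]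
        rw [hdiag, Matrix.mul_sub, Matrix.sub_mul, Matrix.mul_one, hUU]
        congr 1
        rw [Matrix.mul_smul, Matrix.smul_mul]
        congr 1
        rw [hU, hμ]
        exact hH.spectral_theorem
      rw [key]
      have hdpsd : (diagonal (fun i => ((1 - (1+ε) * μ i : ℝ) : ℂ))).PosSemidef :=
        Matrix.PosSemidef.diagonal (fun i => Complex.zero_le_real.2 (hentry i))
      rw [Matrix.star_eq_conjTranspose]
      exact hdpsd.mul_mul_conjTranspose_same U

/-- Dual feasibility for the steering-robustness SDP. -/
def DualFeasible {A X : Type*} [Fintype A] [Fintype X] [DecidableEq A] [DecidableEq X]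
    {n : ℕ} (F : A → X → Matrix (Fin n) (Fin n) ℂ) : Prop :=
  (∀ a x, (F a x).PosSemidef) ∧
  (∀ f : X → A,
    ((1 : Matrix (Fin n) (Fin n) ℂ) -
      ∑ x, ∑ a, if a = f x then F a x else 0).PosSemidef)

/-- Saturation of the dual SDP constraint: an optimal dual solution can be chosen so
that for some deterministic strategy `f` and unit vector `φ`,
`Σ_{a,x} D(a|x,f) ⟨φ|F_{a|x}|φ⟩ = 1`. -/
theorem dual_optimal_solution_saturates
    {A X : Type*} [Fintype A] [Fintype X] [DecidableEq A] [DecidableEq X]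
    [Nonempty X] {n : ℕ}
    (ρ : A → X → Matrix (Fin n) (Fin n) ℂ)
    (hρpos : ∀ a x, (ρ a x).PosSemidef)
    (ρhat : Matrix (Fin n) (Fin n) ℂ)
    (hρhat : ∀ x, ∑ a, ρ a x = ρhat)
    (htr : ρhat.trace = 1)
    (F₀ : A → X → Matrix (Fin n) (Fin n) ℂ)
    (hF₀ : DualFeasible F₀)
    (hopt : ∀ G : A → X → Matrix (Fin n) (Fin n) ℂ, DualFeasible G →
      (∑ a, ∑ x, ((G a x) * (ρ a x)).trace).re
        ≤ (∑ a, ∑ x, ((F₀ a x) * (ρ a x)).trace).re) :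
    ∃ F : A → X → Matrix (Fin n) (Fin n) ℂ,
      DualFeasible F ∧
      (∑ a, ∑ x, ((F a x) * (ρ a x)).trace).re
        = (∑ a, ∑ x, ((F₀ a x) * (ρ a x)).trace).re ∧
      ∃ (f : X → A) (φ : Fin n → ℂ),
        star φ ⬝ᵥ φ = 1 ∧
        (∑ x, ∑ a, if a = f x then star φ ⬝ᵥ (F a x) *ᵥ φ else 0) = 1 := by
  classical
  set S : (X → A) → Matrix (Fin n) (Fin n) ℂ :=
    fun f => ∑ x, ∑ a, if a = f x then F₀ a x else 0 with hSdef
  have hSpsd : ∀ f, (S f).PosSemidef := by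
    intro f
    apply sum_posSemidef
    intro x _
    apply sum_posSemidef
    intro a _
    by_cases h : a = f x
    · simpa [h] using hF₀.1 a x
    · simpa [h] using (Matrix.PosSemidef.zero : (0 : Matrix (Fin n) (Fin n) ℂ).PosSemidef)
  have hScon : ∀ f, ((1 : Matrix (Fin n) (Fin n) ℂ) - S f).PosSemidef := hF₀.2
  by_cases hsat : ∃ f : X → A, ∃ φ : Fin n → ℂ, star φ ⬝ᵥ φ = 1 ∧ star φ ⬝ᵥ (S f) *ᵥ φ = 1
  · obtain ⟨f, φ, h1, h2⟩ := hsat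
    refine ⟨F₀, hF₀, rfl, f, φ, h1, ?_⟩
    rw [← h2, hSdef]
    rw [dot_sum_mulVec]
    refine Finset.sum_congr rfl fun x _ => ?_
    rw [dot_sum_mulVec]
    refine Finset.sum_congr rfl fun a _ => ?_
    by_cases h : a = f x <;> simp [h]
  · exfalso
    push_neg at hsat
    have h2 : ∀ f : X → A, ∃ ε : ℝ, 0 < ε ∧
        ((1 : Matrix (Fin n) (Fin n) ℂ) - ((1+ε : ℝ) : ℂ) • S f).PosSemidef := by
      intro f
      rcases saturate_or_scale (S f) (hSpsd f) (hScon f) with ⟨φ, hφ1, hφ2⟩ | h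
      · exact absurd hφ2 (hsat f φ hφ1)
      · exact h
    choose εf hεf1 hεf2 using h2
    have hA : Nonempty A := by
      by_contra hA
      rw [not_nonempty_iff] at hA
      have h := hρhat (Classical.arbitrary X)
      rw [Finset.univ_eq_empty, Finset.sum_empty] at h
      rw [← h, Matrix.trace_zero] at htr
      exact zero_ne_one htr
    have hneX : (Finset.univ : Finset (X → A)).Nonempty := Finset.univ_nonempty
    set ε : ℝ := Finset.univ.inf' hneX εf with hε
    have hεpos : 0 < ε := (Finset.lt_inf'_iff hneX).2 fun f _ => hεf1 f
    have hεle : ∀ f, ε ≤ εf f := fun f => Finset.inf'_le _ (Finset.mem_univ f)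
    -- Step 1 : the optimal value is positive
    have hcardX : (0:ℝ) < (Fintype.card X : ℝ) := by
      have := Fintype.card_pos (α := X)
      exact_mod_cast this
    set r : ℝ := (Fintype.card X : ℝ)⁻¹ with hr
    have hrpos : 0 < r := by positivity
    have htot : ∑ a, ∑ x : X, ((ρ a x).trace).re = (Fintype.card X : ℝ) := by
      rw [Finset.sum_comm]
      have h1 : ∀ x : X, ∑ a, ((ρ a x).trace).re = 1 := by
        intro x
        have h2 := congrArg Matrix.trace (hρhat x)
        rw [Matrix.trace_sum, htr] at h2
        calc ∑ a, ((ρ a x).trace).re = (∑ a, (ρ a x).trace).re := by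
              rw [Complex.re_sum]
          _ = 1 := by rw [h2]; simp
      simp [h1]
    obtain ⟨a₀, ha₀⟩ : ∃ a₀ : A, 0 < ∑ x, ((ρ a₀ x).trace).re := by
      by_contra h
      push_neg at h
      have hle : ∑ a, ∑ x : X, ((ρ a x).trace).re ≤ 0 :=
        Finset.sum_nonpos fun a _ => h a
      rw [htot] at hle
      linarith
    set H : A → X → Matrix (Fin n) (Fin n) ℂ :=
      fun a x => if a = a₀ then ((r:ℂ)) • 1 else 0 with hHdef
    have hHfeas : DualFeasible H := by
      constructor
      · intro a x
        by_cases h : a = a₀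
        · simpa [hHdef, h] using posSemidef_real_smul Matrix.PosSemidef.one hrpos.le
        · simpa [hHdef, h] using (Matrix.PosSemidef.zero : (0 : Matrix (Fin n) (Fin n) ℂ).PosSemidef)
      · intro f
        have hinner : ∀ x : X, (∑ a, if a = f x then H a x else 0)
            = if f x = a₀ then ((r:ℂ)) • (1 : Matrix (Fin n) (Fin n) ℂ) else 0 := by
          intro x
          rw [Finset.sum_ite_eq' Finset.univ (f x) (fun a => H a x)]
          simp [hHdef]
        rw [show (∑ x, ∑ a, if a = f x then H a x else 0)
            = ∑ x : X, (if f x = a₀ then ((r:ℂ)) • (1 : Matrix (Fin n) (Fin n) ℂ) else 0)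
          from Finset.sum_congr rfl fun x _ => hinner x]
        have hone : (1 : Matrix (Fin n) (Fin n) ℂ)
            = ∑ _x : X, ((r:ℂ)) • (1 : Matrix (Fin n) (Fin n) ℂ) := by
          rw [Finset.sum_const, Finset.card_univ, ← Nat.cast_smul_eq_nsmul ℂ, smul_smul]
          have hc : ((Fintype.card X : ℂ)) * (r:ℂ) = 1 := by
            have h1 : (Fintype.card X : ℝ) * r = 1 := mul_inv_cancel₀ (ne_of_gt hcardX)
            exact_mod_cast h1
          rw [hc, one_smul]
        nth_rewrite 1 [hone]
        rw [← Finset.sum_sub_distrib]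
        apply sum_posSemidef
        intro x _
        by_cases h : f x = a₀
        · simpa [h] using (Matrix.PosSemidef.zero : (0 : Matrix (Fin n) (Fin n) ℂ).PosSemidef)
        · simpa [h] using posSemidef_real_smul Matrix.PosSemidef.one hrpos.le
    have hobjH : (∑ a, ∑ x, ((H a x) * (ρ a x)).trace).re
        = r * ∑ x, ((ρ a₀ x).trace).re := by
      have hstep : ∀ a : A, (∑ x, ((H a x) * (ρ a x)).trace)
          = if a = a₀ then ∑ x, (r:ℂ) * (ρ a₀ x).trace else 0 := by
        intro a
        by_cases h : a = a₀
        · subst h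
          refine (if_pos rfl) ▸ Finset.sum_congr rfl fun x _ => ?_
          rw [hHdef]
          simp [Matrix.smul_mul, Matrix.trace_smul, smul_eq_mul]
        · rw [if_neg h]
          refine Finset.sum_eq_zero fun x _ => ?_
          rw [hHdef]
          simp [h]
      rw [show (∑ a, ∑ x, ((H a x) * (ρ a x)).trace)
          = ∑ a, if a = a₀ then ∑ x, (r:ℂ) * (ρ a₀ x).trace else 0
        from Finset.sum_congr rfl fun a _ => hstep a]
      rw [Finset.sum_ite_eq' Finset.univ a₀ (fun _ => ∑ x, (r:ℂ) * (ρ a₀ x).trace)]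
      rw [if_pos (Finset.mem_univ a₀), ← Finset.mul_sum]
      rw [Complex.mul_re]
      simp [Complex.re_sum]
    have hpos : 0 < (∑ a, ∑ x, ((F₀ a x) * (ρ a x)).trace).re := by
      have := hopt H hHfeas
      rw [hobjH] at this
      have : 0 < r * ∑ x, ((ρ a₀ x).trace).re := mul_pos hrpos ha₀
      linarith [hopt H hHfeas, hobjH ▸ (hopt H hHfeas)]
    -- Step 2 : scale F₀ by 1 + ε
    set G : A → X → Matrix (Fin n) (Fin n) ℂ :=
      fun a x => ((1+ε:ℝ):ℂ) • F₀ a x with hGdef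
    have hGfeas : DualFeasible G := by
      constructor
      · intro a x
        exact posSemidef_real_smul (hF₀.1 a x) (by linarith)
      · intro f
        have hsum : (∑ x, ∑ a, if a = f x then G a x else 0) = ((1+ε:ℝ):ℂ) • S f := by
          rw [hSdef, Finset.smul_sum]
          refine Finset.sum_congr rfl fun x _ => ?_
          rw [Finset.smul_sum]
          refine Finset.sum_congr rfl fun a _ => ?_
          by_cases h : a = f x <;> simp [hGdef, h]
        rw [hsum]
        have heq : (1 : Matrix (Fin n) (Fin n) ℂ) - ((1+ε:ℝ):ℂ) • S f
            = ((1 : Matrix (Fin n) (Fin n) ℂ) - ((1+εf f:ℝ):ℂ) • S f)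
              + ((εf f - ε : ℝ):ℂ) • S f := by
          have h1 : ((1+ε:ℝ):ℂ) = ((1+εf f:ℝ):ℂ) - ((εf f - ε:ℝ):ℂ) := by
            push_cast; ring
          rw [h1, sub_smul]
          abel
        rw [heq]
        exact (hεf2 f).add (posSemidef_real_smul (hSpsd f)
          (by have := hεle f; linarith))
    have hobjG : (∑ a, ∑ x, ((G a x) * (ρ a x)).trace).re
        = (1+ε) * (∑ a, ∑ x, ((F₀ a x) * (ρ a x)).trace).re := by
      have hterm : ∀ a x, ((G a x) * (ρ a x)).trace
          = ((1+ε:ℝ):ℂ) * ((F₀ a x) * (ρ a x)).trace := by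
        intro a x
        rw [hGdef]
        simp [Matrix.smul_mul, Matrix.trace_smul, smul_eq_mul]
      simp_rw [hterm, ← Finset.mul_sum]
      rw [Complex.mul_re]
      simp
    have hle2 := hopt G hGfeas
    rw [hobjG] at hle2
    nlinarith
end

section
/- Let {|ψ_{a|x}⟩}_{a=1..d}, x = 1..d+1, be d+1 mutually unbiased orthonormal bases of C^d. Then for every choice function f : {1,…,d+1} → {1,…,d}, the operator norm satisfies ‖ Σ_{x=1}^{d+1} |ψ_{f(x)|x}⟩⟨ψ_{f(x)|x}| ‖_∞ ≤ 1 + √d. -/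
open Matrix BigOperators
open scoped ComplexOrder

section Aux
open scoped Matrix.Norms.L2Operator

/-- Schur test: an entrywise row/column-sum bound controls the `L²` operator norm. -/
lemma mub_schur_test {m n : Type*} [Fintype m] [Fintype n] [DecidableEq m] [DecidableEq n] (A : Matrix m n ℂ) {c : ℝ}
    (hc : 0 ≤ c)
    (hrow : ∀ x, ∑ y, ‖A x y‖ ≤ c)
    (hcol : ∀ y, ∑ x, ‖A x y‖ ≤ c) :
    ‖A‖ ≤ c := by
  rw [Matrix.l2_opNorm_def]
  refine ContinuousLinearMap.opNorm_le_bound _ hc fun v => ?_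
  have hv2 : ‖v‖ ^ 2 = ∑ y, ‖v y‖ ^ 2 := by
    rw [EuclideanSpace.norm_eq, Real.sq_sqrt (by positivity)]
  have key : ∑ x, ‖(A *ᵥ (WithLp.equiv 2 (n → ℂ) v)) x‖ ^ 2 ≤ c ^ 2 * ‖v‖ ^ 2 := by
    have step1 : ∀ x, ‖(A *ᵥ (WithLp.equiv 2 (n → ℂ) v)) x‖ ^ 2 ≤
        (∑ y, ‖A x y‖) * (∑ y, ‖A x y‖ * ‖v y‖ ^ 2) := by
      intro x
      have h1 : ‖(A *ᵥ (WithLp.equiv 2 (n → ℂ) v)) x‖ ≤ ∑ y, ‖A x y‖ * ‖v y‖ := by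
        refine (norm_sum_le _ _).trans_eq ?_
        refine Finset.sum_congr rfl fun y _ => ?_
        rw [norm_mul]
        rfl
      have h2 : (∑ y, ‖A x y‖ * ‖v y‖) ^ 2 ≤
          (∑ y, ‖A x y‖) * (∑ y, ‖A x y‖ * ‖v y‖ ^ 2) := by
        have hcs := Finset.sum_mul_sq_le_sq_mul_sq Finset.univ
          (fun y => Real.sqrt ‖A x y‖) (fun y => Real.sqrt ‖A x y‖ * ‖v y‖)
        have e1 : ∀ y : n, Real.sqrt ‖A x y‖ * (Real.sqrt ‖A x y‖ * ‖v y‖)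
            = ‖A x y‖ * ‖v y‖ := by
          intro y
          rw [← mul_assoc, Real.mul_self_sqrt (norm_nonneg _)]
        have e2 : ∀ y : n, Real.sqrt ‖A x y‖ ^ 2 = ‖A x y‖ := fun y =>
          Real.sq_sqrt (norm_nonneg _)
        have e3 : ∀ y : n, (Real.sqrt ‖A x y‖ * ‖v y‖) ^ 2 = ‖A x y‖ * ‖v y‖ ^ 2 := by
          intro y
          rw [mul_pow, Real.sq_sqrt (norm_nonneg _)]
        simp only [e1, e2, e3] at hcs
        exact hcs
      calc ‖(A *ᵥ (WithLp.equiv 2 (n → ℂ) v)) x‖ ^ 2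
          ≤ (∑ y, ‖A x y‖ * ‖v y‖) ^ 2 :=
            pow_le_pow_left₀ (norm_nonneg _) h1 2
        _ ≤ _ := h2
    calc ∑ x, ‖(A *ᵥ (WithLp.equiv 2 (n → ℂ) v)) x‖ ^ 2
        ≤ ∑ x, (∑ y, ‖A x y‖) * (∑ y, ‖A x y‖ * ‖v y‖ ^ 2) :=
          Finset.sum_le_sum fun x _ => step1 x
      _ ≤ ∑ x, c * (∑ y, ‖A x y‖ * ‖v y‖ ^ 2) := by
          refine Finset.sum_le_sum fun x _ => ?_
          exact mul_le_mul_of_nonneg_right (hrow x)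
            (Finset.sum_nonneg fun y _ => by positivity)
      _ = c * ∑ y, (∑ x, ‖A x y‖) * ‖v y‖ ^ 2 := by
          rw [← Finset.mul_sum, Finset.sum_comm]
          congr 1
          refine Finset.sum_congr rfl fun y _ => ?_
          rw [Finset.sum_mul]
      _ ≤ c * ∑ y, c * ‖v y‖ ^ 2 := by
          refine mul_le_mul_of_nonneg_left (Finset.sum_le_sum fun y _ => ?_) hc
          exact mul_le_mul_of_nonneg_right (hcol y) (by positivity)
      _ = c ^ 2 * ‖v‖ ^ 2 := by
          rw [← Finset.mul_sum, ← hv2]; ring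
  have hnormAv : ‖(Matrix.toEuclideanLin ≪≫ₗ LinearMap.toContinuousLinearMap) A v‖
      = Real.sqrt (∑ x, ‖(A *ᵥ (WithLp.equiv 2 (n → ℂ) v)) x‖ ^ 2) := by
    rw [EuclideanSpace.norm_eq]
    rfl
  rw [hnormAv]
  calc Real.sqrt (∑ x, ‖(A *ᵥ (WithLp.equiv 2 (n → ℂ) v)) x‖ ^ 2)
      ≤ Real.sqrt (c ^ 2 * ‖v‖ ^ 2) := Real.sqrt_le_sqrt key
    _ = c * ‖v‖ := by
        rw [← mul_pow, Real.sqrt_sq (by positivity)]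

lemma mub_projector_sum_norm_bound_aux
    {d : ℕ} (hd : 0 < d)
    (ψ : Fin d → Fin (d + 1) → (Fin d → ℂ))
    (horth : ∀ x a b, star (ψ a x) ⬝ᵥ ψ b x = if a = b then 1 else 0)
    (hmub : ∀ (x y : Fin (d + 1)) (a b : Fin d), x ≠ y →
      ‖star (ψ a x) ⬝ᵥ ψ b y‖ = 1 / Real.sqrt d)
    (f : Fin (d + 1) → Fin d) :
    ‖Matrix.toEuclideanCLM (𝕜 := ℂ)
        (∑ x, Matrix.vecMulVec (ψ (f x) x) (star (ψ (f x) x)))‖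
      ≤ 1 + Real.sqrt d := by
  classical
  have hd' : (0:ℝ) < (d:ℝ) := by exact_mod_cast hd
  have hsd : (0:ℝ) < Real.sqrt d := Real.sqrt_pos.2 hd'
  set B : Matrix (Fin d) (Fin (d+1)) ℂ := Matrix.of (fun i x => ψ (f x) x i) with hB
  have hM : (∑ x, Matrix.vecMulVec (ψ (f x) x) (star (ψ (f x) x))) = B * Bᴴ := by
    ext i j
    simp [Matrix.sum_apply, Matrix.mul_apply, Matrix.vecMulVec_apply,
      Matrix.conjTranspose_apply, hB]
  set G : Matrix (Fin (d+1)) (Fin (d+1)) ℂ := Bᴴ * B with hG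
  have hGentry : ∀ x y, G x y = star (ψ (f x) x) ⬝ᵥ ψ (f y) y := by
    intro x y
    simp [hG, Matrix.mul_apply, Matrix.conjTranspose_apply, dotProduct, hB]
  have hnorm : ‖Matrix.toEuclideanCLM (𝕜 := ℂ) (B * Bᴴ)‖ = ‖G‖ := by
    rw [← Matrix.cstar_norm_def]
    calc ‖B * Bᴴ‖ = ‖Bᴴᴴ * Bᴴ‖ := by rw [Matrix.conjTranspose_conjTranspose]
      _ = ‖Bᴴ‖ * ‖Bᴴ‖ := Matrix.l2_opNorm_conjTranspose_mul_self _
      _ = ‖B‖ * ‖B‖ := by rw [Matrix.l2_opNorm_conjTranspose]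
      _ = ‖Bᴴ * B‖ := (Matrix.l2_opNorm_conjTranspose_mul_self B).symm
  set E : Matrix (Fin (d+1)) (Fin (d+1)) ℂ := G - 1 with hE
  have hEnorm : ∀ x y, ‖E x y‖ = if x = y then 0 else 1 / Real.sqrt d := by
    intro x y
    by_cases h : x = y
    · subst h
      have hgx : G x x = 1 := by rw [hGentry]; simpa using horth x (f x) (f x)
      simp [hE, Matrix.sub_apply, Matrix.one_apply_eq, hgx]
    · have h1 : (1 : Matrix (Fin (d+1)) (Fin (d+1)) ℂ) x y = 0 := Matrix.one_apply_ne h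
      simp only [hE, Matrix.sub_apply, h1, sub_zero, if_neg h]
      rw [hGentry]
      exact hmub x y (f x) (f y) h
  have hsum : ∀ x : Fin (d+1), ∑ y, (if x = y then (0:ℝ) else 1 / Real.sqrt d)
      = Real.sqrt d := by
    intro x
    have hpt : ∀ y : Fin (d+1), (if x = y then (0:ℝ) else 1 / Real.sqrt d)
        = 1 / Real.sqrt d - (if x = y then 1 / Real.sqrt d else 0) := by
      intro y; by_cases h : x = y <;> simp [h]
    rw [Finset.sum_congr rfl fun y _ => hpt y, Finset.sum_sub_distrib,
      Finset.sum_const, Finset.sum_ite_eq Finset.univ x fun _ => 1 / Real.sqrt d]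
    simp only [Finset.card_univ, Fintype.card_fin, Finset.mem_univ, if_pos,
      nsmul_eq_mul]
    have : ((d:ℝ) + 1) * (1 / Real.sqrt d) - 1 / Real.sqrt d = (d:ℝ) / Real.sqrt d := by
      field_simp
      ring
    push_cast
    rw [this, Real.div_sqrt]
  have hEbound : ‖E‖ ≤ Real.sqrt d := by
    refine mub_schur_test E hsd.le (fun x => ?_) (fun y => ?_)
    · refine le_of_eq ?_
      simp only [hEnorm]
      exact hsum x
    · refine le_of_eq ?_
      simp only [hEnorm]
      have hswap : (∑ x, if x = y then (0:ℝ) else 1 / Real.sqrt d)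
          = ∑ x, if y = x then (0:ℝ) else 1 / Real.sqrt d := by
        refine Finset.sum_congr rfl fun x _ => ?_
        by_cases h : x = y
        · subst h; simp
        · rw [if_neg h, if_neg fun hh => h hh.symm]
      rw [hswap]
      exact hsum y
  have hone : ‖(1 : Matrix (Fin (d+1)) (Fin (d+1)) ℂ)‖ = 1 := CStarRing.norm_one
  have hGE : G = 1 + E := by simp [hE]
  calc ‖Matrix.toEuclideanCLM (𝕜 := ℂ)
        (∑ x, Matrix.vecMulVec (ψ (f x) x) (star (ψ (f x) x)))‖
      = ‖G‖ := by rw [hM, hnorm]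
    _ = ‖(1 : Matrix (Fin (d+1)) (Fin (d+1)) ℂ) + E‖ := by rw [← hGE]
    _ ≤ ‖(1 : Matrix (Fin (d+1)) (Fin (d+1)) ℂ)‖ + ‖E‖ := norm_add_le _ _
    _ ≤ 1 + Real.sqrt d := by rw [hone]; exact add_le_add_right hEbound 1

end Aux

/-- For `d+1` mutually unbiased bases of `ℂ^d` and any choice function `f`, the sum of
the chosen rank-one projectors has operator norm at most `1 + √d`. -/
theorem mub_projector_sum_norm_bound
    {d : ℕ} (hd : 0 < d)
    (ψ : Fin d → Fin (d + 1) → (Fin d → ℂ))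
    (horth : ∀ x a b, star (ψ a x) ⬝ᵥ ψ b x = if a = b then 1 else 0)
    (hmub : ∀ (x y : Fin (d + 1)) (a b : Fin d), x ≠ y →
      ‖star (ψ a x) ⬝ᵥ ψ b y‖ = 1 / Real.sqrt d)
    (f : Fin (d + 1) → Fin d) :
    ‖Matrix.toEuclideanCLM (𝕜 := ℂ)
        (∑ x, Matrix.vecMulVec (ψ (f x) x) (star (ψ (f x) x)))‖
      ≤ 1 + Real.sqrt d :=
  mub_projector_sum_norm_bound_aux hd ψ horth hmub f
end

section
/- Let {|ψ_{a|x}⟩}, a = 1..d, x = 1..d+1, be d+1 mutually unbiased bases of C^d and consider the assemblage ρ_{a|x} = (1/d)|ψ_{a|x}⟩⟨ψ_{a|x}|. Then the steering robustness satisfies R({ρ_{a|x}}) ≥ √d·(√d−1)/(√d+1) ≥ √d − 2. In particular the operators F_{a|x} = (1/(√d+1))|ψ_{a|x}⟩⟨ψ_{a|x}| are dual-feasible (F_{a|x} ≥ 0 and Σ_{a,x} D(a|x,λ)F_{a|x} ≤ 1 for every deterministic λ) and achieve Σ_{a,x} Tr(F_{a|x}ρ_{a|x}) = (d+1)/(√d+1).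 -/
open Matrix BigOperators
open scoped ComplexOrder

namespace MUBAux


variable {n : ℕ}

lemma star_dot_self (v : Fin n → ℂ) :
    star v ⬝ᵥ v = ((∑ i, ‖v i‖ ^ 2 : ℝ) : ℂ) := by
  simp only [dotProduct, Pi.star_apply, RCLike.star_def, Complex.conj_mul',
    Complex.ofReal_sum, Complex.ofReal_pow]

lemma star_dot_conj (u v : Fin n → ℂ) :
    star v ⬝ᵥ u = starRingEnd ℂ (star u ⬝ᵥ v) := by
  simp only [dotProduct, Pi.star_apply, RCLike.star_def, map_sum, _root_.map_mul,
    Complex.conj_conj]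
  exact Finset.sum_congr rfl fun i _ => mul_comm _ _

lemma vecMulVec_mulVec (u w v : Fin n → ℂ) :
    vecMulVec u w *ᵥ v = (w ⬝ᵥ v) • u := by
  funext i
  simp [mulVec, vecMulVec_apply, dotProduct, Finset.mul_sum, mul_comm, mul_assoc, mul_left_comm]

lemma quad_vecMulVec (w v : Fin n → ℂ) :
    star v ⬝ᵥ (vecMulVec w (star w) *ᵥ v) = ((‖star w ⬝ᵥ v‖ ^ 2 : ℝ) : ℂ) := by
  rw [vecMulVec_mulVec, dotProduct_smul]
  rw [star_dot_conj w v, smul_eq_mul, Complex.mul_conj', Complex.ofReal_pow]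

lemma vecMulVec_isHermitian (w : Fin n → ℂ) :
    (vecMulVec w (star w)).IsHermitian := by
  ext i j
  simp [conjTranspose_apply, vecMulVec_apply, mul_comm]

lemma vecMulVec_posSemidef (w : Fin n → ℂ) :
    (vecMulVec w (star w)).PosSemidef := by
  refine Matrix.PosSemidef.of_dotProduct_mulVec_nonneg (vecMulVec_isHermitian w) fun v => ?_
  rw [quad_vecMulVec]
  rw [Complex.zero_le_real]
  positivity


lemma posSemidef_real_smul {A : Matrix (Fin n) (Fin n) ℂ} (hA : A.PosSemidef)
    {c : ℝ} (hc : 0 ≤ c) : ((c : ℂ) • A).PosSemidef := by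
  refine Matrix.PosSemidef.of_dotProduct_mulVec_nonneg ?_ fun v => ?_
  · unfold Matrix.IsHermitian
    rw [conjTranspose_smul, hA.1.eq]
    congr 1
    simp [RCLike.star_def, Complex.conj_ofReal]
  · rw [smul_mulVec, dotProduct_smul, smul_eq_mul]
    have h := hA.dotProduct_mulVec_nonneg v
    rw [Complex.nonneg_iff] at h ⊢
    constructor
    · simp only [Complex.mul_re, Complex.ofReal_re, Complex.ofReal_im, zero_mul, sub_zero]
      exact mul_nonneg hc h.1
    · simp only [Complex.mul_im, Complex.ofReal_re, Complex.ofReal_im, zero_mul, add_zero,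
        ← h.2, mul_zero]

lemma psd_diag_nonneg {A : Matrix (Fin n) (Fin n) ℂ} (hA : A.PosSemidef) (i : Fin n) :
    0 ≤ A i i := by
  have h := hA.dotProduct_mulVec_nonneg (Pi.single i 1)
  simpa [mulVec_single, dotProduct, Pi.star_apply, Pi.single_apply, Finset.sum_ite_eq,
    apply_ite] using h

lemma psd_trace_nonneg {A : Matrix (Fin n) (Fin n) ℂ} (hA : A.PosSemidef) :
    0 ≤ A.trace := by
  rw [Matrix.trace]
  exact Finset.sum_nonneg fun i _ => psd_diag_nonneg hA i

open scoped MatrixOrder in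
lemma psd_trace_mul_nonneg {A B : Matrix (Fin n) (Fin n) ℂ}
    (hA : A.PosSemidef) (hB : B.PosSemidef) : 0 ≤ (A * B).trace := by
  have hB0 : (0 : Matrix (Fin n) (Fin n) ℂ) ≤ B := Matrix.nonneg_iff_posSemidef.mpr hB
  have hs : (CFC.sqrt B).PosSemidef := Matrix.nonneg_iff_posSemidef.mp (CFC.sqrt_nonneg B)
  have h1 : A * B = A * CFC.sqrt B * CFC.sqrt B := by rw [mul_assoc, CFC.sqrt_mul_sqrt_self B hB0]
  rw [h1, Matrix.trace_mul_cycle]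
  have h2 : CFC.sqrt B * A * CFC.sqrt B = (CFC.sqrt B)ᴴ * A * CFC.sqrt B := by
    rw [hs.isHermitian.eq]
  rw [h2]
  exact psd_trace_nonneg (hA.conjTranspose_mul_mul_same _)

lemma trace_vecMulVec (u v : Fin n → ℂ) : (vecMulVec u v).trace = v ⬝ᵥ u := by
  simp [Matrix.trace, Matrix.diag, vecMulVec_apply, dotProduct, mul_comm]

lemma vecMulVec_mul_vecMulVec (u su v sv : Fin n → ℂ) :
    vecMulVec u su * vecMulVec v sv = (su ⬝ᵥ v) • vecMulVec u sv := by
  ext i j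
  simp only [Matrix.mul_apply, vecMulVec_apply, Matrix.smul_apply, smul_eq_mul, dotProduct,
    Finset.sum_mul, Finset.mul_sum]
  exact Finset.sum_congr rfl fun k _ => by ring

lemma trace_proj_mul_proj (u v : Fin n → ℂ) :
    (vecMulVec u (star u) * vecMulVec v (star v)).trace
      = ((‖star u ⬝ᵥ v‖ ^ 2 : ℝ) : ℂ) := by
  rw [vecMulVec_mul_vecMulVec, Matrix.trace_smul, trace_vecMulVec, smul_eq_mul,
    star_dot_conj u v, Complex.mul_conj', Complex.ofReal_pow]


lemma dotProduct_sum' {ι : Type*} (u : Fin n → ℂ) (s : Finset ι) (v : ι → Fin n → ℂ) :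
    u ⬝ᵥ (∑ x ∈ s, v x) = ∑ x ∈ s, u ⬝ᵥ v x := by
  simp only [dotProduct, Finset.sum_apply, Finset.mul_sum]
  exact Finset.sum_comm

lemma sum_dotProduct' {ι : Type*} (s : Finset ι) (v : ι → Fin n → ℂ) (u : Fin n → ℂ) :
    (∑ x ∈ s, v x) ⬝ᵥ u = ∑ x ∈ s, v x ⬝ᵥ u := by
  simp only [dotProduct, Finset.sum_apply, Finset.sum_mul]
  exact Finset.sum_comm

lemma sum_mulVec' {ι : Type*} (s : Finset ι) (M : ι → Matrix (Fin n) (Fin n) ℂ)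
    (v : Fin n → ℂ) : (∑ x ∈ s, M x) *ᵥ v = ∑ x ∈ s, M x *ᵥ v := by
  funext i
  simp only [mulVec, dotProduct, Matrix.sum_apply, Finset.sum_mul, Finset.sum_apply]
  rw [Finset.sum_comm]

lemma dot_sq_le (u w : Fin n → ℂ) :
    ‖star u ⬝ᵥ w‖ ^ 2 ≤ (∑ i, ‖u i‖ ^ 2) * (∑ i, ‖w i‖ ^ 2) := by
  have h1 : ‖star u ⬝ᵥ w‖ ≤ ∑ i, ‖u i‖ * ‖w i‖ := by
    refine (norm_sum_le _ _).trans_eq ?_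
    simp [Pi.star_apply]
  calc ‖star u ⬝ᵥ w‖ ^ 2 ≤ (∑ i, ‖u i‖ * ‖w i‖) ^ 2 :=
        pow_le_pow_left₀ (norm_nonneg _) h1 2
    _ ≤ _ := Finset.sum_mul_sq_le_sq_mul_sq _ _ _

lemma one_sub_proj_psd {w : Fin n → ℂ} (hw : star w ⬝ᵥ w = 1) :
    ((1 : Matrix (Fin n) (Fin n) ℂ) - vecMulVec w (star w)).PosSemidef := by
  have hwn : (∑ i, ‖w i‖ ^ 2) = 1 := by
    have := hw
    rw [star_dot_self] at this
    exact_mod_cast this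
  refine Matrix.PosSemidef.of_dotProduct_mulVec_nonneg
    (Matrix.IsHermitian.sub Matrix.isHermitian_one (vecMulVec_isHermitian w)) fun v => ?_
  rw [Matrix.sub_mulVec, dotProduct_sub, Matrix.one_mulVec, quad_vecMulVec, star_dot_self]
  rw [← Complex.ofReal_sub, Complex.zero_le_real, sub_nonneg]
  have := dot_sq_le w v
  rwa [hwn, one_mul] at this

section MUB

variable {d : ℕ} (ψ : Fin d → Fin (d + 1) → (Fin d → ℂ))

lemma completeness
    (horth : ∀ x a b, star (ψ a x) ⬝ᵥ ψ b x = if a = b then 1 else 0)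
    (x : Fin (d + 1)) :
    ∑ a, vecMulVec (ψ a x) (star (ψ a x)) = 1 := by
  classical
  set U : Matrix (Fin d) (Fin d) ℂ := Matrix.of (fun i a => ψ a x i) with hU
  have h1 : Uᴴ * U = 1 := by
    ext a b
    have h := horth x a b
    simp only [Matrix.mul_apply, conjTranspose_apply, hU, Matrix.of_apply, Matrix.one_apply]
    simpa [dotProduct, Pi.star_apply] using h
  have h2 : U * Uᴴ = 1 := mul_eq_one_comm.mp h1
  rw [← h2]
  ext i j
  simp [Matrix.sum_apply, vecMulVec_apply, Matrix.mul_apply, hU, mul_comm]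


lemma sum_proj_mulVec
    (f : Fin (d + 1) → Fin d) (v : Fin d → ℂ) :
    star v ⬝ᵥ ((∑ x, vecMulVec (ψ (f x) x) (star (ψ (f x) x))) *ᵥ v)
      = ((∑ x, ‖star (ψ (f x) x) ⬝ᵥ v‖ ^ 2 : ℝ) : ℂ) := by
  rw [sum_mulVec', dotProduct_sum', Complex.ofReal_sum]
  exact Finset.sum_congr rfl fun x _ => by
    rw [quad_vecMulVec, Complex.ofReal_pow]

lemma S_bound (hd : 0 < d)
    (horth : ∀ x a b, star (ψ a x) ⬝ᵥ ψ b x = if a = b then 1 else 0)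
    (hmub : ∀ (x y : Fin (d + 1)) (a b : Fin d), x ≠ y →
      ‖star (ψ a x) ⬝ᵥ ψ b y‖ = 1 / Real.sqrt d)
    (f : Fin (d + 1) → Fin d) (v : Fin d → ℂ) :
    (∑ x, ‖star (ψ (f x) x) ⬝ᵥ v‖ ^ 2)
      ≤ (1 + Real.sqrt d) * (∑ i, ‖v i‖ ^ 2) := by
  classical
  set φ : Fin (d + 1) → (Fin d → ℂ) := fun x => ψ (f x) x with hφ
  set c : Fin (d + 1) → ℂ := fun x => star (φ x) ⬝ᵥ v with hc
  set S : ℝ := ∑ x, ‖c x‖ ^ 2 with hS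
  set N : ℝ := ∑ i, ‖v i‖ ^ 2 with hN
  set w : Fin d → ℂ := ∑ x, c x • φ x with hw
  have hSnn : 0 ≤ S := Finset.sum_nonneg fun _ _ => by positivity
  have hNnn : 0 ≤ N := Finset.sum_nonneg fun _ _ => by positivity
  have hsd : (0:ℝ) < Real.sqrt d := Real.sqrt_pos.mpr (by exact_mod_cast hd)
  -- star v ⬝ᵥ w = S
  have hvw : star v ⬝ᵥ w = ((S : ℝ) : ℂ) := by
    rw [hw, dotProduct_sum', hS, Complex.ofReal_sum]
    refine Finset.sum_congr rfl fun x _ => ?_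
    rw [dotProduct_smul, smul_eq_mul, star_dot_conj (φ x) v,
      show star (φ x) ⬝ᵥ v = c x from rfl, Complex.mul_conj', Complex.ofReal_pow]
  -- S^2 ≤ N * W
  set W : ℝ := ∑ i, ‖w i‖ ^ 2 with hW
  have hWnn : 0 ≤ W := Finset.sum_nonneg fun _ _ => by positivity
  have hS2 : S ^ 2 ≤ N * W := by
    have h1 := dot_sq_le v w
    rw [hvw] at h1
    simpa [abs_of_nonneg hSnn] using h1
  -- W ≤ (1 + √d) * S
  have hWb : W ≤ (1 + Real.sqrt d) * S := by
    have hww : star w ⬝ᵥ w = ∑ x, starRingEnd ℂ (c x) * ∑ y, c y * (star (φ x) ⬝ᵥ φ y) := by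
      rw [hw, star_sum, sum_dotProduct']
      refine Finset.sum_congr rfl fun x _ => ?_
      rw [star_smul, smul_dotProduct, dotProduct_sum']
      simp only [RCLike.star_def, smul_eq_mul]
      congr 1
      exact Finset.sum_congr rfl fun y _ => by rw [dotProduct_smul, smul_eq_mul]
    have hWeq : W = (star w ⬝ᵥ w).re := by
      rw [star_dot_self w, Complex.ofReal_re]
    have hnormG : ∀ x y, ‖(star (φ x) ⬝ᵥ φ y : ℂ)‖ ≤ if x = y then 1 else 1 / Real.sqrt d := by
      intro x y
      by_cases h : x = y
      · subst h
        simp only [if_pos rfl, hφ]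
        rw [horth x (f x) (f x)]
        simp
      · rw [if_neg h, hφ]
        exact le_of_eq (hmub x y (f x) (f y) h)
    have hbound : (star w ⬝ᵥ w).re
        ≤ ∑ x, ‖c x‖ * ∑ y, ‖c y‖ * ‖(star (φ x) ⬝ᵥ φ y : ℂ)‖ := by
      rw [hww]
      refine le_trans (Complex.re_le_norm _) ?_
      refine (norm_sum_le _ _).trans ?_
      refine Finset.sum_le_sum fun x _ => ?_
      rw [norm_mul, RCLike.norm_conj]
      refine mul_le_mul_of_nonneg_left ?_ (norm_nonneg _)
      refine (norm_sum_le _ _).trans ?_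
      exact Finset.sum_le_sum fun y _ => le_of_eq (norm_mul _ _)
    have hinner : ∀ x, (∑ y, ‖c y‖ * ‖(star (φ x) ⬝ᵥ φ y : ℂ)‖)
        ≤ ‖c x‖ + (1 / Real.sqrt d) * ∑ y ∈ Finset.univ.erase x, ‖c y‖ := by
      intro x
      rw [← Finset.add_sum_erase _ _ (Finset.mem_univ x), Finset.mul_sum]
      refine add_le_add ?_ (Finset.sum_le_sum fun y hy => ?_)
      · refine (mul_le_mul_of_nonneg_left (hnormG x x) (norm_nonneg _)).trans_eq ?_
        simp
      · rw [mul_comm (1 / Real.sqrt d)]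
        refine mul_le_mul_of_nonneg_left ?_ (norm_nonneg _)
        have := hnormG x y
        rwa [if_neg (fun h => (Finset.mem_erase.mp hy).1 h.symm)] at this
    -- combine
    have hmain : (star w ⬝ᵥ w).re ≤ S + (1 / Real.sqrt d) *
        ∑ x, ∑ y ∈ Finset.univ.erase x, ‖c x‖ * ‖c y‖ := by
      refine hbound.trans ?_
      have : ∀ x, ‖c x‖ * (∑ y, ‖c y‖ * ‖(star (φ x) ⬝ᵥ φ y : ℂ)‖)
          ≤ ‖c x‖ ^ 2 + (1 / Real.sqrt d) * ∑ y ∈ Finset.univ.erase x, ‖c x‖ * ‖c y‖ := by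
        intro x
        refine (mul_le_mul_of_nonneg_left (hinner x) (norm_nonneg _)).trans_eq ?_
        rw [mul_add, sq]
        congr 1
        rw [← mul_assoc, mul_comm ‖c x‖ (1 / Real.sqrt (d:ℝ)), mul_assoc, Finset.mul_sum]
      refine (Finset.sum_le_sum fun x _ => this x).trans_eq ?_
      rw [Finset.sum_add_distrib, ← hS, Finset.mul_sum]
    -- off-diagonal bound : ∑∑ ≤ d * S
    have hoff : (∑ x, ∑ y ∈ Finset.univ.erase x, ‖c x‖ * ‖c y‖) ≤ d * S := by
      have h1 : ∀ x, (∑ y ∈ Finset.univ.erase x, ‖c x‖ * ‖c y‖)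
          ≤ ∑ y ∈ Finset.univ.erase x, (‖c x‖ ^ 2 + ‖c y‖ ^ 2) / 2 := by
        intro x
        refine Finset.sum_le_sum fun y _ => ?_
        nlinarith [sq_nonneg (‖c x‖ - ‖c y‖), norm_nonneg (c x), norm_nonneg (c y)]
      refine (Finset.sum_le_sum fun x _ => h1 x).trans_eq ?_
      have h2 : ∀ x : Fin (d+1), (∑ y ∈ Finset.univ.erase x, (‖c x‖ ^ 2 + ‖c y‖ ^ 2) / 2)
          = (d * ‖c x‖ ^ 2 + (S - ‖c x‖ ^ 2)) / 2 := by
        intro x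
        rw [← Finset.sum_div]
        congr 1
        rw [Finset.sum_add_distrib, Finset.sum_const, Finset.card_erase_of_mem (Finset.mem_univ x),
          Finset.sum_erase_eq_sub (Finset.mem_univ x), Finset.card_univ, Fintype.card_fin, ← hS]
        simp [nsmul_eq_mul]
      rw [Finset.sum_congr rfl fun x _ => h2 x, ← Finset.sum_div, Finset.sum_add_distrib,
        Finset.sum_sub_distrib, ← Finset.mul_sum, ← hS, Finset.sum_const, Finset.card_univ,
        Fintype.card_fin, nsmul_eq_mul]
      push_cast
      ring
    have hdd : (1 / Real.sqrt d) * ((d : ℝ) * S) = Real.sqrt d * S := by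
      have h : (1 / Real.sqrt d) * ((d : ℝ) * S) = ((d : ℝ) / Real.sqrt d) * S := by ring
      rw [h, Real.div_sqrt]
    calc W = (star w ⬝ᵥ w).re := hWeq
      _ ≤ S + (1 / Real.sqrt d) * ∑ x, ∑ y ∈ Finset.univ.erase x, ‖c x‖ * ‖c y‖ := hmain
      _ ≤ S + (1 / Real.sqrt d) * ((d : ℝ) * S) := by
          refine add_le_add le_rfl (mul_le_mul_of_nonneg_left hoff (by positivity))
      _ = S + Real.sqrt d * S := by rw [hdd]
      _ = (1 + Real.sqrt d) * S := by ring
  -- conclude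
  rcases eq_or_lt_of_le hSnn with h0 | h0
  · rw [← h0]
    positivity
  · have : S ^ 2 ≤ N * ((1 + Real.sqrt d) * S) :=
      hS2.trans (mul_le_mul_of_nonneg_left hWb hNnn)
    have h2 : S * S ≤ ((1 + Real.sqrt d) * N) * S := by nlinarith
    exact le_of_mul_le_mul_right h2 h0


lemma psd_sum {ι : Type*} (s : Finset ι) (M : ι → Matrix (Fin n) (Fin n) ℂ)
    (h : ∀ i ∈ s, (M i).PosSemidef) : (∑ i ∈ s, M i).PosSemidef :=
  Finset.sum_induction M _ (fun _ _ ha hb => ha.add hb) Matrix.PosSemidef.zero h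

lemma dual_psd_core (hd : 0 < d)
    (horth : ∀ x a b, star (ψ a x) ⬝ᵥ ψ b x = if a = b then 1 else 0)
    (hmub : ∀ (x y : Fin (d + 1)) (a b : Fin d), x ≠ y →
      ‖star (ψ a x) ⬝ᵥ ψ b y‖ = 1 / Real.sqrt d)
    (f : Fin (d + 1) → Fin d) :
    ((1 : Matrix (Fin d) (Fin d) ℂ) -
      ∑ x, (((Real.sqrt d + 1)⁻¹ : ℝ) : ℂ) •
        vecMulVec (ψ (f x) x) (star (ψ (f x) x))).PosSemidef := by
  classical
  have hs1 : (0:ℝ) < Real.sqrt d + 1 := by positivity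
  have hsinv : (0:ℝ) ≤ (Real.sqrt d + 1)⁻¹ := by positivity
  rw [← Finset.smul_sum]
  set X : Matrix (Fin d) (Fin d) ℂ := ∑ x, vecMulVec (ψ (f x) x) (star (ψ (f x) x)) with hX
  have hXpsd : X.PosSemidef := psd_sum _ _ fun x _ => vecMulVec_posSemidef _
  have hXherm := (posSemidef_real_smul hXpsd hsinv).1
  refine Matrix.PosSemidef.of_dotProduct_mulVec_nonneg (Matrix.isHermitian_one.sub hXherm) fun v => ?_
  rw [Matrix.sub_mulVec, dotProduct_sub, Matrix.one_mulVec, smul_mulVec,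
    dotProduct_smul, star_dot_self, hX, sum_proj_mulVec, smul_eq_mul, ← Complex.ofReal_mul,
    ← Complex.ofReal_sub, Complex.zero_le_real, sub_nonneg]
  have hSb := S_bound ψ hd horth hmub f v
  have hNnn : (0:ℝ) ≤ ∑ i, ‖v i‖ ^ 2 := Finset.sum_nonneg fun _ _ => by positivity
  calc (Real.sqrt d + 1)⁻¹ * ∑ x, ‖star (ψ (f x) x) ⬝ᵥ v‖ ^ 2
      ≤ (Real.sqrt d + 1)⁻¹ * ((1 + Real.sqrt d) * ∑ i, ‖v i‖ ^ 2) :=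
        mul_le_mul_of_nonneg_left hSb hsinv
    _ = ∑ i, ‖v i‖ ^ 2 := by field_simp; ring

lemma dual_psd (hd : 0 < d)
    (horth : ∀ x a b, star (ψ a x) ⬝ᵥ ψ b x = if a = b then 1 else 0)
    (hmub : ∀ (x y : Fin (d + 1)) (a b : Fin d), x ≠ y →
      ‖star (ψ a x) ⬝ᵥ ψ b y‖ = 1 / Real.sqrt d)
    (f : Fin (d + 1) → Fin d) :
    ((1 : Matrix (Fin d) (Fin d) ℂ) -
      ∑ x, ∑ a, if a = f x then (((Real.sqrt d + 1)⁻¹ : ℝ) : ℂ) •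
        vecMulVec (ψ a x) (star (ψ a x)) else 0).PosSemidef := by
  classical
  have hcol : ∀ x : Fin (d + 1),
      (∑ a, if a = f x then (((Real.sqrt d + 1)⁻¹ : ℝ) : ℂ) •
        vecMulVec (ψ a x) (star (ψ a x)) else 0)
      = (((Real.sqrt d + 1)⁻¹ : ℝ) : ℂ) • vecMulVec (ψ (f x) x) (star (ψ (f x) x)) := by
    intro x
    simp
  rw [Finset.sum_congr rfl fun x _ => hcol x]
  exact dual_psd_core ψ hd horth hmub f

lemma objective_value (hd : 0 < d)
    (horth : ∀ x a b, star (ψ a x) ⬝ᵥ ψ b x = if a = b then 1 else 0) :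
    (∑ a : Fin d, ∑ x : Fin (d + 1),
        (((((Real.sqrt d + 1)⁻¹ : ℝ) : ℂ) • vecMulVec (ψ a x) (star (ψ a x))) *
          ((((d : ℝ)⁻¹ : ℝ) : ℂ) • vecMulVec (ψ a x) (star (ψ a x)))).trace).re
      = ((d : ℝ) + 1) / (Real.sqrt d + 1) := by
  have hterm : ∀ (a : Fin d) (x : Fin (d + 1)),
      (((((Real.sqrt d + 1)⁻¹ : ℝ) : ℂ) • vecMulVec (ψ a x) (star (ψ a x))) *
        ((((d : ℝ)⁻¹ : ℝ) : ℂ) • vecMulVec (ψ a x) (star (ψ a x)))).trace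
      = (((Real.sqrt d + 1)⁻¹ * (d : ℝ)⁻¹ : ℝ) : ℂ) := by
    intro a x
    rw [smul_mul_assoc, mul_smul_comm, Matrix.trace_smul, Matrix.trace_smul,
      trace_proj_mul_proj, horth x a a, if_pos rfl]
    simp only [norm_one, one_pow, Complex.ofReal_one, smul_eq_mul, mul_one,
      ← Complex.ofReal_mul]
  simp only [hterm]
  simp only [Finset.sum_const, Finset.card_univ, Fintype.card_fin, nsmul_eq_mul]
  rw [show ((d : ℕ) : ℂ) = (((d : ℝ)) : ℂ) by norm_cast,
    show (((d + 1 : ℕ)) : ℂ) = (((d + 1 : ℝ)) : ℂ) by norm_cast,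
    ← Complex.ofReal_mul, ← Complex.ofReal_mul, Complex.ofReal_re]
  have hd0 : ((d:ℝ)) ≠ 0 := by positivity
  have hs1 : (Real.sqrt d + 1) ≠ 0 := by positivity
  field_simp


lemma card_fix (x : Fin (d + 1)) (a : Fin d) :
    (Finset.univ.filter (fun f : Fin (d + 1) → Fin d => a = f x)).card = d ^ d := by
  classical
  rw [← Fintype.card_subtype]
  let e : {f : Fin (d + 1) → Fin d // a = f x} ≃ ({y : Fin (d + 1) // y ≠ x} → Fin d) :=
  { toFun := fun f y => f.1 y.1
    invFun := fun g => ⟨fun y => if h : y = x then a else g ⟨y, h⟩, by simp⟩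
    left_inv := fun f => by
      apply Subtype.ext
      funext y
      by_cases h : y = x
      · subst h
        simpa using f.2
      · simp [h]
    right_inv := fun g => by
      funext y
      simp [y.2] }
  rw [Fintype.card_congr e, Fintype.card_fun]
  congr 1
  · exact Fintype.card_fin d
  have : Fintype.card {y : Fin (d + 1) // y ≠ x} = (d + 1) - 1 := by
    rw [Fintype.card_subtype_compl (fun y => y = x), Fintype.card_subtype_eq, Fintype.card_fin]
  rw [this]
  omega


lemma tau_sum (hd : 0 < d)
    (horth : ∀ x a b, star (ψ a x) ⬝ᵥ ψ b x = if a = b then 1 else 0)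
    (x : Fin (d + 1)) :
    ∑ a, (((((d:ℝ)⁻¹ ^ 3 : ℝ)) : ℂ) • (1 : Matrix (Fin d) (Fin d) ℂ) +
        ((((d:ℝ)⁻¹ ^ 2 : ℝ)) : ℂ) • (1 - vecMulVec (ψ a x) (star (ψ a x))))
      = ((((d:ℝ)⁻¹ : ℝ)) : ℂ) • (1 : Matrix (Fin d) (Fin d) ℂ) := by
  have hdc : ((d:ℂ)) ≠ 0 := Nat.cast_ne_zero.mpr hd.ne'
  rw [Finset.sum_add_distrib, Finset.sum_const, ← Finset.smul_sum, Finset.sum_sub_distrib,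
    Finset.sum_const, completeness ψ horth x, Finset.card_univ, Fintype.card_fin,
    ← Nat.cast_smul_eq_nsmul ℂ, ← Nat.cast_smul_eq_nsmul ℂ, smul_smul, smul_sub, smul_smul,
    ← sub_smul, ← add_smul]
  congr 1
  push_cast
  field_simp
  ring

lemma assemblage_tau (hd : 0 < d)
    (horth : ∀ x a b, star (ψ a x) ⬝ᵥ ψ b x = if a = b then 1 else 0) :
    IsAssemblage (fun (a : Fin d) (x : Fin (d + 1)) =>
      (((((d:ℝ)⁻¹ ^ 3 : ℝ)) : ℂ) • (1 : Matrix (Fin d) (Fin d) ℂ) +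
        ((((d:ℝ)⁻¹ ^ 2 : ℝ)) : ℂ) • (1 - vecMulVec (ψ a x) (star (ψ a x))))) := by
  have hdc : ((d:ℂ)) ≠ 0 := Nat.cast_ne_zero.mpr hd.ne'
  refine ⟨fun a x => ?_, fun x x' => ?_, fun x => ?_⟩
  · exact (posSemidef_real_smul Matrix.PosSemidef.one (by positivity)).add
      (posSemidef_real_smul (one_sub_proj_psd (by simpa using horth x a a)) (by positivity))
  · rw [tau_sum ψ hd horth x, tau_sum ψ hd horth x']
  · rw [tau_sum ψ hd horth x, Matrix.trace_smul, Matrix.trace_one]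
    simp only [smul_eq_mul, Fintype.card_fin]
    push_cast
    field_simp

lemma unsteerable_mix (hd : 0 < d)
    (horth : ∀ x a b, star (ψ a x) ⬝ᵥ ψ b x = if a = b then 1 else 0) :
    Unsteerable (fun (a : Fin d) (x : Fin (d + 1)) =>
      (((1 + (d:ℝ))⁻¹ : ℝ) : ℂ) •
        (((((d : ℝ)⁻¹ : ℝ)) : ℂ) • vecMulVec (ψ a x) (star (ψ a x)) +
          (((d:ℝ) : ℝ) : ℂ) •
            ((((((d:ℝ)⁻¹ ^ 3 : ℝ)) : ℂ) • (1 : Matrix (Fin d) (Fin d) ℂ) +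
              ((((d:ℝ)⁻¹ ^ 2 : ℝ)) : ℂ) • (1 - vecMulVec (ψ a x) (star (ψ a x))))))) := by
  classical
  have hdc : ((d:ℂ)) ≠ 0 := Nat.cast_ne_zero.mpr hd.ne'
  have h1dc : (1 : ℂ) + (d:ℂ) ≠ 0 := by
    have : (((1 + (d:ℝ)) : ℝ) : ℂ) ≠ 0 := Complex.ofReal_ne_zero.mpr (by positivity)
    push_cast at this
    exact this
  refine ⟨fun _ => ((((d:ℝ) ^ d)⁻¹ * (d:ℝ)⁻¹ ^ 2 : ℝ) : ℂ) • (1 : Matrix (Fin d) (Fin d) ℂ),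
    fun f => posSemidef_real_smul Matrix.PosSemidef.one (by positivity), fun a x => ?_⟩
  rw [← Finset.sum_filter, Finset.sum_const, card_fix x a, ← Nat.cast_smul_eq_nsmul ℂ,
    smul_smul]
  ext i j
  simp only [Matrix.smul_apply, Matrix.add_apply, Matrix.sub_apply, Matrix.one_apply,
    smul_eq_mul]
  push_cast
  by_cases h : i = j
  · simp only [h, if_pos rfl]
    field_simp
    ring
  · simp only [h, if_neg h]
    field_simp
    ring


lemma key_ineq (hd : 0 < d)
    (horth : ∀ x a b, star (ψ a x) ⬝ᵥ ψ b x = if a = b then 1 else 0)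
    (hmub : ∀ (x y : Fin (d + 1)) (a b : Fin d), x ≠ y →
      ‖star (ψ a x) ⬝ᵥ ψ b y‖ = 1 / Real.sqrt d)
    {t : ℝ} (ht0 : 0 ≤ t)
    (τ : Fin d → Fin (d + 1) → Matrix (Fin d) (Fin d) ℂ)
    (hτ : IsAssemblage τ)
    (hU : Unsteerable (fun (a : Fin d) (x : Fin (d + 1)) => (((1 + t)⁻¹ : ℝ) : ℂ) •
      (((((d : ℝ)⁻¹ : ℝ)) : ℂ) • vecMulVec (ψ a x) (star (ψ a x)) + ((t : ℝ) : ℂ) • τ a x))) :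
    ((d : ℝ) + 1) / (Real.sqrt d + 1) ≤ 1 + t := by
  classical
  obtain ⟨σ, hσpsd, hσeq⟩ := hU
  have hσeq' : ∀ a x, (((1 + t)⁻¹ : ℝ) : ℂ) •
      (((((d : ℝ)⁻¹ : ℝ)) : ℂ) • vecMulVec (ψ a x) (star (ψ a x)) + ((t : ℝ) : ℂ) • τ a x)
      = ∑ f : Fin (d + 1) → Fin d, if a = f x then σ f else 0 := hσeq
  have hobj := objective_value ψ hd horth
  have hdc : ((d:ℂ)) ≠ 0 := Nat.cast_ne_zero.mpr hd.ne'
  have h1t : (0:ℝ) < 1 + t := by linarith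
  have h1tne : (1 + t : ℝ) ≠ 0 := h1t.ne'
  set F : Fin d → Fin (d + 1) → Matrix (Fin d) (Fin d) ℂ :=
    fun a x => (((Real.sqrt d + 1)⁻¹ : ℝ) : ℂ) • vecMulVec (ψ a x) (star (ψ a x)) with hF
  set ρ : Fin d → Fin (d + 1) → Matrix (Fin d) (Fin d) ℂ :=
    fun a x => ((((d : ℝ)⁻¹ : ℝ)) : ℂ) • vecMulVec (ψ a x) (star (ψ a x)) with hρ
  set μ : Fin d → Fin (d + 1) → Matrix (Fin d) (Fin d) ℂ :=
    fun a x => (((1 + t)⁻¹ : ℝ) : ℂ) • (ρ a x + ((t : ℝ) : ℂ) • τ a x) with hμ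
  have hFpsd : ∀ a x, (F a x).PosSemidef :=
    fun a x => posSemidef_real_smul (vecMulVec_posSemidef _) (by positivity)
  -- nonnegativity of tr(F τ)
  have hFτ : ∀ a x, 0 ≤ ((F a x * τ a x).trace).re := by
    intro a x
    have h := psd_trace_mul_nonneg (hFpsd a x) (hτ.1 a x)
    simpa using (Complex.le_def.mp h).1
  -- linearity
  have hlin : ∀ a x, (1 + t) * ((F a x * μ a x).trace).re
      = ((F a x * ρ a x).trace).re + t * ((F a x * τ a x).trace).re := by
    intro a x
    have hexp : F a x * μ a x
        = (((1 + t)⁻¹ : ℝ) : ℂ) • (F a x * ρ a x + ((t : ℝ) : ℂ) • (F a x * τ a x)) := by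
      simp only [hμ, mul_smul_comm, mul_add]
    rw [hexp, Matrix.trace_smul, Matrix.trace_add, Matrix.trace_smul]
    simp only [smul_eq_mul]
    rw [Complex.re_ofReal_mul, Complex.add_re, Complex.re_ofReal_mul]
    field_simp
  -- total mass of σ
  have hσmass : (∑ f : Fin (d + 1) → Fin d, ((σ f).trace).re) = 1 := by
    set x₀ : Fin (d + 1) := 0 with hx₀
    have h4 : (∑ f : Fin (d + 1) → Fin d, σ f) = ∑ a, μ a x₀ := by
      rw [Finset.sum_congr rfl fun a (_ : a ∈ Finset.univ) => hσeq' a x₀, Finset.sum_comm]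
      exact Finset.sum_congr rfl fun f _ => by simp
    have hρsum : (∑ a, ρ a x₀) = ((((d : ℝ)⁻¹ : ℝ)) : ℂ) • 1 := by
      rw [hρ, ← Finset.smul_sum, completeness ψ horth x₀]
    have h5 : (∑ a, μ a x₀).trace = 1 := by
      simp only [hμ, hρ]
      rw [← Finset.smul_sum, Finset.sum_add_distrib, ← Finset.smul_sum, ← Finset.smul_sum,
        completeness ψ horth x₀, Matrix.trace_smul, Matrix.trace_add, Matrix.trace_smul,
        Matrix.trace_smul, Matrix.trace_one, hτ.2.2 x₀]
      simp only [smul_eq_mul, Fintype.card_fin, mul_one]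
      push_cast
      field_simp
    have h6 : (∑ f : Fin (d + 1) → Fin d, (σ f).trace) = 1 := by
      rw [← Matrix.trace_sum, h4, h5]
    calc (∑ f : Fin (d + 1) → Fin d, ((σ f).trace).re)
        = ((∑ f : Fin (d + 1) → Fin d, (σ f).trace)).re := (Complex.re_sum _ _).symm
      _ = 1 := by rw [h6]; simp
  -- decomposition bound
  have h3 : (∑ a, ∑ x, ((F a x * μ a x).trace).re) ≤ 1 := by
    have hdec : ∀ a x, ((F a x * μ a x).trace).re
        = ∑ f : Fin (d + 1) → Fin d, (if a = f x then ((F a x * σ f).trace).re else 0) := by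
      intro a x
      have : F a x * μ a x = ∑ f : Fin (d + 1) → Fin d,
          (if a = f x then F a x * σ f else 0) := by
        have hμσ : μ a x = ∑ f : Fin (d + 1) → Fin d, if a = f x then σ f else 0 := hσeq' a x
        rw [hμσ, Finset.mul_sum]
        exact Finset.sum_congr rfl fun f _ => by rw [mul_ite, mul_zero]
      rw [this, Matrix.trace_sum, Complex.re_sum]
      exact Finset.sum_congr rfl fun f _ => by
        simp [apply_ite Matrix.trace, apply_ite Complex.re]
    calc (∑ a, ∑ x, ((F a x * μ a x).trace).re)
        = ∑ a, ∑ x, ∑ f : Fin (d + 1) → Fin d,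
            (if a = f x then ((F a x * σ f).trace).re else 0) := by
          exact Finset.sum_congr rfl fun a _ => Finset.sum_congr rfl fun x _ => hdec a x
      _ = ∑ x, ∑ f : Fin (d + 1) → Fin d, ∑ a,
            (if a = f x then ((F a x * σ f).trace).re else 0) := by
          rw [Finset.sum_comm]
          exact Finset.sum_congr rfl fun x _ => Finset.sum_comm
      _ = ∑ f : Fin (d + 1) → Fin d, ∑ x, ((F (f x) x * σ f).trace).re := by
          rw [Finset.sum_comm]
          exact Finset.sum_congr rfl fun f _ => Finset.sum_congr rfl fun x _ => by simp
      _ = ∑ f : Fin (d + 1) → Fin d, (((∑ x, F (f x) x) * σ f).trace).re := by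
          exact Finset.sum_congr rfl fun f _ => by
            rw [Finset.sum_mul, Matrix.trace_sum, Complex.re_sum]
      _ ≤ ∑ f : Fin (d + 1) → Fin d, ((σ f).trace).re := by
          refine Finset.sum_le_sum fun f _ => ?_
          have h0 := psd_trace_mul_nonneg (dual_psd_core ψ hd horth hmub f) (hσpsd f)
          rw [sub_mul, one_mul, Matrix.trace_sub] at h0
          have h1 := (Complex.le_def.mp h0).1
          rw [Complex.sub_re] at h1
          simp only [Complex.zero_re] at h1
          linarith
      _ = 1 := hσmass
  -- combine
  have h2 : ((d : ℝ) + 1) / (Real.sqrt d + 1) ≤ (1 + t) * ∑ a, ∑ x, ((F a x * μ a x).trace).re := by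
    have e1 : (1 + t) * (∑ a, ∑ x, ((F a x * μ a x).trace).re)
        = (∑ a, ∑ x, ((F a x * ρ a x).trace).re)
          + t * (∑ a, ∑ x, ((F a x * τ a x).trace).re) := by
      have hstep : ∀ a, (1 + t) * (∑ x, ((F a x * μ a x).trace).re)
          = (∑ x, ((F a x * ρ a x).trace).re) + t * (∑ x, ((F a x * τ a x).trace).re) := by
        intro a
        rw [Finset.mul_sum, Finset.sum_congr rfl fun x _ => hlin a x, Finset.sum_add_distrib,
          ← Finset.mul_sum]
      rw [Finset.mul_sum, Finset.sum_congr rfl fun a (_ : a ∈ Finset.univ) => hstep a,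
        Finset.sum_add_distrib, ← Finset.mul_sum]
    have e2 : 0 ≤ t * (∑ a, ∑ x, ((F a x * τ a x).trace).re) :=
      mul_nonneg ht0 (Finset.sum_nonneg fun a _ => Finset.sum_nonneg fun x _ => hFτ a x)
    have hobj' : (∑ a, ∑ x, ((F a x * ρ a x).trace).re)
        = ((d : ℝ) + 1) / (Real.sqrt d + 1) := by
      rw [Finset.sum_congr rfl fun a (_ : a ∈ Finset.univ) => (Complex.re_sum _ _).symm,
        ← Complex.re_sum]
      exact hobj
    rw [e1]
    linarith
  calc ((d : ℝ) + 1) / (Real.sqrt d + 1)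
      ≤ (1 + t) * ∑ a, ∑ x, ((F a x * μ a x).trace).re := h2
    _ ≤ (1 + t) * 1 := by
        exact mul_le_mul_of_nonneg_left h3 (le_of_lt h1t)
    _ = 1 + t := mul_one _

end MUB

end MUBAux

/-- For the assemblage built from `d+1` mutually unbiased bases,
`ρ_{a|x} = (1/d)|ψ_{a|x}⟩⟨ψ_{a|x}|`, the steering robustness is at least
`√d(√d−1)/(√d+1) ≥ √d − 2`; moreover `F_{a|x} = (1/(√d+1))|ψ_{a|x}⟩⟨ψ_{a|x}|`
is dual feasible and achieves objective value `(d+1)/(√d+1)`. -/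
theorem mub_assemblage_robustness_lower_bound
    {d : ℕ} (hd : 0 < d)
    (ψ : Fin d → Fin (d + 1) → (Fin d → ℂ))
    (horth : ∀ x a b, star (ψ a x) ⬝ᵥ ψ b x = if a = b then 1 else 0)
    (hmub : ∀ (x y : Fin (d + 1)) (a b : Fin d), x ≠ y →
      ‖star (ψ a x) ⬝ᵥ ψ b y‖ = 1 / Real.sqrt d) :
    SteeringRobustness (fun (a : Fin d) (x : Fin (d + 1)) =>
        (((d : ℝ)⁻¹ : ℝ) : ℂ) • Matrix.vecMulVec (ψ a x) (star (ψ a x)))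
      ≥ Real.sqrt d * (Real.sqrt d - 1) / (Real.sqrt d + 1) ∧
    Real.sqrt d * (Real.sqrt d - 1) / (Real.sqrt d + 1) ≥ Real.sqrt d - 2 ∧
    (∀ a x, ((((Real.sqrt d + 1)⁻¹ : ℝ) : ℂ) •
        Matrix.vecMulVec (ψ a x) (star (ψ a x))).PosSemidef) ∧
    (∀ f : Fin (d + 1) → Fin d,
      ((1 : Matrix (Fin d) (Fin d) ℂ) -
        ∑ x, ∑ a, if a = f x then
          (((Real.sqrt d + 1)⁻¹ : ℝ) : ℂ) •
            Matrix.vecMulVec (ψ a x) (star (ψ a x)) else 0).PosSemidef) ∧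
    (∑ a, ∑ x,
        (((((Real.sqrt d + 1)⁻¹ : ℝ) : ℂ) •
            Matrix.vecMulVec (ψ a x) (star (ψ a x))) *
          ((((d : ℝ)⁻¹ : ℝ) : ℂ) •
            Matrix.vecMulVec (ψ a x) (star (ψ a x)))).trace).re
      = ((d : ℝ) + 1) / (Real.sqrt d + 1) := by
  classical
  have hsq : Real.sqrt d * Real.sqrt d = d := Real.mul_self_sqrt (Nat.cast_nonneg d)
  have hs1 : (0:ℝ) < Real.sqrt d + 1 := by positivity
  refine ⟨?_, ?_, ?_, fun f => MUBAux.dual_psd ψ hd horth hmub f,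
    MUBAux.objective_value ψ hd horth⟩
  · rw [ge_iff_le]
    unfold SteeringRobustness
    refine le_csInf ⟨(d:ℝ), Nat.cast_nonneg d,
      (fun (a : Fin d) (x : Fin (d + 1)) =>
        (((((d:ℝ)⁻¹ ^ 3 : ℝ)) : ℂ) • (1 : Matrix (Fin d) (Fin d) ℂ) +
          ((((d:ℝ)⁻¹ ^ 2 : ℝ)) : ℂ) • (1 - Matrix.vecMulVec (ψ a x) (star (ψ a x))))),
      MUBAux.assemblage_tau ψ hd horth, MUBAux.unsteerable_mix ψ hd horth⟩ ?_
    rintro t ⟨ht0, τ, hτ, hU⟩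
    have hk := MUBAux.key_ineq ψ hd horth hmub ht0 τ hτ hU
    have hb : Real.sqrt d * (Real.sqrt d - 1) / (Real.sqrt d + 1) + 1
        = ((d:ℝ) + 1) / (Real.sqrt d + 1) := by
      field_simp
      linear_combination hsq
    linarith
  · rw [ge_iff_le, le_div_iff₀ hs1]
    nlinarith [Real.sqrt_nonneg (d:ℝ), hsq]
  · exact fun a x => MUBAux.posSemidef_real_smul (MUBAux.vecMulVec_posSemidef _) (by positivity)
end
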